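/- arXiv:1402.3859 — 6 statements merged into one kernel-verified Lean document; each statement's English description precedes it below -/
import Mathlib

section
/- In BS(1,q) with q ≥ 2, every element x with x = t^{-m} a^N t^n in normal form (m, n ≥ 0, N ≠ 0) has word length at most m + n + 2q(⌊log_q |N|⌋ + 1) with respect to the generating set {a, a⁻¹, t, t⁻¹}. -/
def bsRel (p q : ℕ) : Set (FreeGroup Bool) :=
  {FreeGroup.of true * FreeGroup.of false ^ p * (FreeGroup.of true)⁻¹ * (FreeGroup.of false ^ q)⁻¹}

/-- The Baumslag–Solitar group BS(p,q) = ⟨a,t | t a^p t⁻¹ = a^q⟩. -/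
abbrev BS (p q : ℕ) : Type := PresentedGroup (bsRel p q)

def BS.a (p q : ℕ) : BS p q := PresentedGroup.of false
def BS.t (p q : ℕ) : BS p q := PresentedGroup.of true

/-- The symmetric generating set {a, a⁻¹, t, t⁻¹}. -/
def genSet (p q : ℕ) : Set (BS p q) := {BS.a p q, (BS.a p q)⁻¹, BS.t p q, (BS.t p q)⁻¹}

/-- Word length with respect to {a^{±1}, t^{±1}}. -/
noncomputable def wlen (p q : ℕ) (x : BS p q) : ℕ :=
  sInf {n | ∃ l : List (BS p q), l.length = n ∧ (∀ g ∈ l, g ∈ genSet p q) ∧ l.prod = x}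

/-- The syllable a^j t^{±1} : `(j, true)` ↦ a^j t, `(j, false)` ↦ a^j t⁻¹. -/
def syl (p q : ℕ) (s : ℕ × Bool) : BS p q :=
  BS.a p q ^ s.1 * if s.2 then BS.t p q else (BS.t p q)⁻¹

lemma BS.rel (q : ℕ) : BS.t 1 q * BS.a 1 q * (BS.t 1 q)⁻¹ = BS.a 1 q ^ q := by
  have h : PresentedGroup.mk (bsRel 1 q)
      (FreeGroup.of true * FreeGroup.of false ^ 1 * (FreeGroup.of true)⁻¹ *
        (FreeGroup.of false ^ q)⁻¹) = 1 := by
    have : (FreeGroup.of true * FreeGroup.of false ^ 1 * (FreeGroup.of true)⁻¹ *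
        (FreeGroup.of false ^ q)⁻¹ : FreeGroup Bool) ∈ Subgroup.normalClosure (bsRel 1 q) :=
      Subgroup.subset_normalClosure rfl
    exact (QuotientGroup.eq_one_iff _).mpr this
  simp only [map_mul, map_inv, map_pow, pow_one] at h
  have := mul_eq_one_iff_eq_inv.mp h
  rw [inv_inv] at this
  exact this

lemma BS.rel_zpow (q : ℕ) (M : ℤ) :
    BS.t 1 q * BS.a 1 q ^ M * (BS.t 1 q)⁻¹ = BS.a 1 q ^ (q * M) := by
  have : BS.t 1 q * BS.a 1 q ^ M * (BS.t 1 q)⁻¹ = (BS.t 1 q * BS.a 1 q * (BS.t 1 q)⁻¹) ^ M := by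
    rw [conj_zpow]
  rw [this, BS.rel, ← zpow_natCast, ← zpow_mul]

lemma a_mem (q : ℕ) : BS.a 1 q ∈ genSet 1 q := by simp [genSet]
lemma t_mem (q : ℕ) : BS.t 1 q ∈ genSet 1 q := by simp [genSet]
lemma ti_mem (q : ℕ) : (BS.t 1 q)⁻¹ ∈ genSet 1 q := by simp [genSet]
lemma inv_mem_gen (q : ℕ) {g : BS 1 q} (h : g ∈ genSet 1 q) : g⁻¹ ∈ genSet 1 q := by
  simp only [genSet, Set.mem_insert_iff, Set.mem_singleton_iff] at h ⊢
  rcases h with h | h | h | h <;> simp [h]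

/-- Express a^k (k : ℕ) as a short word. -/
lemma word_of_nat (q : ℕ) (hq : 2 ≤ q) : ∀ k : ℕ, ∃ l : List (BS 1 q),
    (∀ g ∈ l, g ∈ genSet 1 q) ∧ l.prod = BS.a 1 q ^ (k : ℤ) ∧
    l.length ≤ 2 * q * (Nat.log q k + 1) := by
  intro k
  induction k using Nat.strong_induction_on with
  | _ k ih =>
    by_cases hk : k < q
    · refine ⟨List.replicate k (BS.a 1 q), ?_, ?_, ?_⟩
      · intro g hg; rw [List.eq_of_mem_replicate hg]; exact a_mem q
      · simp [List.prod_replicate, zpow_natCast]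
      · simp only [List.length_replicate]
        calc k ≤ 2 * q := by omega
          _ ≤ 2 * q * (Nat.log q k + 1) := Nat.le_mul_of_pos_right _ (by omega)
    · push_neg at hk
      have hq0 : 0 < q := by omega
      have hM : k / q < k := Nat.div_lt_self (by omega) (by omega)
      obtain ⟨l, hgen, hprod, hlen⟩ := ih (k / q) hM
      refine ⟨List.replicate (k % q) (BS.a 1 q) ++ [BS.t 1 q] ++ l ++ [(BS.t 1 q)⁻¹],
        ?_, ?_, ?_⟩
      · intro g hg
        simp only [List.mem_append, List.mem_singleton] at hg
        rcases hg with ((hg | hg) | hg) | hg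
        · rw [List.eq_of_mem_replicate hg]; exact a_mem q
        · rw [hg]; exact t_mem q
        · exact hgen g hg
        · rw [hg]; exact ti_mem q
      · simp only [List.prod_append, List.prod_replicate, List.prod_singleton, hprod]
        rw [mul_assoc, mul_assoc, ← mul_assoc (BS.t 1 q), BS.rel_zpow]
        rw [← zpow_natCast (BS.a 1 q) (k % q), ← zpow_add]
        congr 1
        exact_mod_cast Nat.mod_add_div k q
      · simp only [List.length_append, List.length_replicate, List.length_singleton]
        have h1 : k % q < q := Nat.mod_lt _ hq0
        have h2 : Nat.log q (k / q) = Nat.log q k - 1 := Nat.log_div_base q k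
        have h3 : 1 ≤ Nat.log q k := Nat.log_pos (by omega) hk
        have : 2 * q * (Nat.log q (k / q) + 1) = 2 * q * Nat.log q k := by
          rw [h2]; congr 1; omega
        rw [this] at hlen
        have : 2 * q * (Nat.log q k + 1) = 2 * q * Nat.log q k + 2 * q := by ring
        omega

lemma word_of_int (q : ℕ) (hq : 2 ≤ q) (N : ℤ) : ∃ l : List (BS 1 q),
    (∀ g ∈ l, g ∈ genSet 1 q) ∧ l.prod = BS.a 1 q ^ N ∧
    l.length ≤ 2 * q * (Nat.log q N.natAbs + 1) := by
  rcases le_or_gt 0 N with h | h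
  · obtain ⟨l, hgen, hprod, hlen⟩ := word_of_nat q hq N.toNat
    refine ⟨l, hgen, ?_, ?_⟩
    · rw [hprod]; congr 1; omega
    · convert hlen using 4; omega
  · obtain ⟨l, hgen, hprod, hlen⟩ := word_of_nat q hq (-N).toNat
    refine ⟨(l.map (·⁻¹)).reverse, ?_, ?_, ?_⟩
    · intro g hg
      simp only [List.mem_reverse, List.mem_map] at hg
      obtain ⟨g', hg', rfl⟩ := hg
      exact inv_mem_gen q (hgen g' hg')
    · rw [← List.prod_inv_reverse, hprod, ← zpow_neg]
      congr 1; omega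
    · simp only [List.length_reverse, List.length_map]
      convert hlen using 4; omega

/-- In BS(1,q) with q ≥ 2, every element x with normal form t^{-m} a^N t^n
(m,n ≥ 0, N ≠ 0, and q ∤ N unless m = 0 or n = 0) has word length at most
m + n + 2q(⌊log_q |N|⌋ + 1). -/
theorem stmt2 (q : ℕ) (hq : 2 ≤ q) (m n : ℕ) (N : ℤ) (hN : N ≠ 0)
    (hnf : m ≠ 0 → n ≠ 0 → ¬ ((q : ℤ) ∣ N))
    (x : BS 1 q) (hx : x = (BS.t 1 q)⁻¹ ^ m * BS.a 1 q ^ N * BS.t 1 q ^ n) :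
    wlen 1 q x ≤ m + n + 2 * q * (Nat.log q N.natAbs + 1) := by
  obtain ⟨l, hgen, hprod, hlen⟩ := word_of_int q hq N
  set L : List (BS 1 q) := List.replicate m (BS.t 1 q)⁻¹ ++ l ++ List.replicate n (BS.t 1 q)
  have hLgen : ∀ g ∈ L, g ∈ genSet 1 q := by
    intro g hg
    simp only [L, List.mem_append] at hg
    rcases hg with (hg | hg) | hg
    · rw [List.eq_of_mem_replicate hg]; exact ti_mem q
    · exact hgen g hg
    · rw [List.eq_of_mem_replicate hg]; exact t_mem q
  have hLprod : L.prod = x := by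
    simp only [L, List.prod_append, List.prod_replicate, hprod, hx]
  have hmem : L.length ∈ {k | ∃ l' : List (BS 1 q), l'.length = k ∧
      (∀ g ∈ l', g ∈ genSet 1 q) ∧ l'.prod = x} := ⟨L, rfl, hLgen, hLprod⟩
  have h1 : wlen 1 q x ≤ L.length := Nat.sInf_le hmem
  have h2 : L.length = m + l.length + n := by
    simp [L]; omega
  omega
end

section
/- In BS(1,q) with q ≥ 2, if x = t^{-m} a^N t^n with N ≠ 0 and ‖x‖ = k is the word length with respect to {a^{±1}, t^{±1}}, then m + n ≤ k and log |N| ≤ (2 log q + 1) k; consequently m + n + log |N| ≤ (2 log q + 2)·‖x‖. -/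
@[ext] structure QA (u : ℝˣ) where
  e : ℤ
  b : ℝ

namespace QA

variable {u : ℝˣ}

noncomputable instance : Mul (QA u) := ⟨fun x y => ⟨x.e + y.e, x.b + (u : ℝ) ^ x.e * y.b⟩⟩
instance : One (QA u) := ⟨⟨0, 0⟩⟩
noncomputable instance : Inv (QA u) := ⟨fun x => ⟨-x.e, -((u : ℝ) ^ (-x.e) * x.b)⟩⟩

@[simp] lemma mul_e (x y : QA u) : (x * y).e = x.e + y.e := rfl
@[simp] lemma mul_b (x y : QA u) : (x * y).b = x.b + (u : ℝ) ^ x.e * y.b := rfl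
@[simp] lemma one_e : (1 : QA u).e = 0 := rfl
@[simp] lemma one_b : (1 : QA u).b = 0 := rfl
@[simp] lemma inv_e (x : QA u) : (x⁻¹).e = -x.e := rfl
@[simp] lemma inv_b (x : QA u) : (x⁻¹).b = -((u : ℝ) ^ (-x.e) * x.b) := rfl

noncomputable instance : Group (QA u) where
  mul_assoc x y z := by
    ext
    · simp; ring
    · simp [zpow_add₀ u.ne_zero]; ring
  one_mul x := by ext <;> simp
  mul_one x := by ext <;> simp
  inv_mul_cancel x := by
    ext
    · simp
    · simp [← zpow_add₀ u.ne_zero]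

lemma t_pow (k : ℕ) : (⟨1, 0⟩ : QA u) ^ k = ⟨k, 0⟩ := by
  induction k with
  | zero => ext <;> simp
  | succ k ih => rw [pow_succ, ih]; ext <;> simp

lemma a_pow (k : ℕ) : (⟨0, 1⟩ : QA u) ^ k = ⟨0, (k : ℝ)⟩ := by
  induction k with
  | zero => ext <;> simp
  | succ k ih => rw [pow_succ, ih]; ext <;> simp

lemma a_zpow (N : ℤ) : (⟨0, 1⟩ : QA u) ^ N = ⟨0, (N : ℝ)⟩ := by
  cases N with
  | ofNat k => simpa using a_pow (u := u) k
  | negSucc k =>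
    rw [zpow_negSucc, a_pow]
    ext <;> simp

end QA

def fgen (u : ℝˣ) : Bool → QA u
  | true => ⟨1, 0⟩
  | false => ⟨0, 1⟩

lemma rel_holds (q : ℕ) {u : ℝˣ} (hu : (u : ℝ) = q) :
    ∀ r ∈ bsRel 1 q, FreeGroup.lift (fgen u) r = 1 := by
  intro r hr
  simp only [bsRel, Set.mem_singleton_iff] at hr
  subst hr
  simp only [map_mul, map_inv, map_pow, FreeGroup.lift_apply_of, fgen]
  simp only [QA.a_pow, pow_one]
  ext <;> simp [hu]

noncomputable def φ (q : ℕ) {u : ℝˣ} (hu : (u : ℝ) = q) : BS 1 q →* QA u :=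
  PresentedGroup.toGroup (rel_holds q hu)

lemma φ_a (q : ℕ) {u : ℝˣ} (hu : (u : ℝ) = q) : φ q hu (BS.a 1 q) = ⟨0, 1⟩ :=
  PresentedGroup.toGroup.of _

lemma φ_t (q : ℕ) {u : ℝˣ} (hu : (u : ℝ) = q) : φ q hu (BS.t 1 q) = ⟨1, 0⟩ :=
  PresentedGroup.toGroup.of _

lemma key (q : ℕ) (hq : 2 ≤ q) {u : ℝˣ} (hu : (u : ℝ) = q) (l : List (QA u))
    (hl : ∀ g ∈ l, g = (⟨0, 1⟩ : QA u) ∨ g = (⟨0, 1⟩ : QA u)⁻¹ ∨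
          g = (⟨1, 0⟩ : QA u) ∨ g = (⟨1, 0⟩ : QA u)⁻¹) :
    ∃ P M : ℕ, ∃ c : ℤ, P + M ≤ l.length ∧ l.prod.e = (P : ℤ) - M ∧
      l.prod.b * (q : ℝ) ^ M = (c : ℝ) ∧ |c| ≤ l.length * (q : ℤ) ^ l.length := by
  have hq0 : (q : ℝ) ≠ 0 := by positivity
  have hq1 : (1 : ℤ) ≤ (q : ℤ) := by exact_mod_cast Nat.one_le_of_lt hq
  induction l with
  | nil => exact ⟨0, 0, 0, by simp, by simp, by simp, by simp⟩
  | cons g l ih =>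
    obtain ⟨P, M, c, hPM, he, hb, hc⟩ := ih (fun g hg => hl g (List.mem_cons_of_mem _ hg))
    set L := l.length with hL
    have hML : (M : ℕ) ≤ L := le_trans (Nat.le_add_left _ _) hPM
    have hpow : (q : ℤ) ^ M ≤ (q : ℤ) ^ (L + 1) :=
      pow_le_pow_right₀ hq1 (by omega)
    have hpow2 : (L : ℤ) * (q : ℤ) ^ L ≤ L * (q : ℤ) ^ (L + 1) := by
      have : (q : ℤ) ^ L ≤ (q : ℤ) ^ (L + 1) := pow_le_pow_right₀ hq1 (by omega)
      have hL0 : (0 : ℤ) ≤ L := Int.natCast_nonneg L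
      nlinarith
    rcases hl g List.mem_cons_self with h | h | h | h <;> subst h
    · -- a
      refine ⟨P, M, c + q ^ M, by simp; omega, by simpa using he, ?_, ?_⟩
      · have hb' : ((⟨0, 1⟩ : QA u) :: l).prod.b = 1 + l.prod.b := by simp
        rw [hb', add_mul, hb]
        push_cast
        ring
      · calc |c + (q : ℤ) ^ M| ≤ |c| + |(q : ℤ) ^ M| := abs_add_le _ _
          _ ≤ L * q ^ L + q ^ (L + 1) := by
              rw [abs_pow, abs_of_nonneg (by omega : (0:ℤ) ≤ q)]
              exact add_le_add hc hpow
          _ ≤ (L + 1 : ℕ) * q ^ (L + 1) := by push_cast; linarith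
    · -- a⁻¹
      refine ⟨P, M, c - q ^ M, by simp; omega, by simpa using he, ?_, ?_⟩
      · have hb' : ((⟨0, 1⟩ : QA u)⁻¹ :: l).prod.b = -1 + l.prod.b := by simp
        rw [hb', add_mul, hb]
        push_cast
        ring
      · calc |c - (q : ℤ) ^ M| ≤ |c| + |(q : ℤ) ^ M| := abs_sub _ _
          _ ≤ L * q ^ L + q ^ (L + 1) := by
              rw [abs_pow, abs_of_nonneg (by omega : (0:ℤ) ≤ q)]
              exact add_le_add hc hpow
          _ ≤ (L + 1 : ℕ) * q ^ (L + 1) := by push_cast; linarith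
    · -- t
      refine ⟨P + 1, M, q * c, by simp; omega, ?_, ?_, ?_⟩
      · simp only [List.prod_cons, QA.mul_e]
        push_cast
        omega
      · have hb' : ((⟨1, 0⟩ : QA u) :: l).prod.b = (q : ℝ) * l.prod.b := by
          simp [hu]
        rw [hb', mul_assoc, hb]
        push_cast
        ring
      · calc |(q : ℤ) * c| = q * |c| := by
              rw [abs_mul, abs_of_nonneg (by omega : (0:ℤ) ≤ q)]
          _ ≤ q * (L * q ^ L) := by
              apply mul_le_mul_of_nonneg_left hc (by omega)
          _ = L * q ^ (L + 1) := by ring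
          _ ≤ (L + 1 : ℕ) * q ^ (L + 1) := by
              push_cast
              have : (0:ℤ) ≤ (q:ℤ) ^ (L+1) := by positivity
              nlinarith
    · -- t⁻¹
      refine ⟨P, M + 1, c, by simp; omega, ?_, ?_, ?_⟩
      · simp only [List.prod_cons, QA.mul_e, QA.inv_e]
        push_cast
        omega
      · have hb' : ((⟨1, 0⟩ : QA u)⁻¹ :: l).prod.b = (q : ℝ)⁻¹ * l.prod.b := by
          simp [hu, zpow_neg]
        rw [hb', pow_succ']
        rw [← hb]
        field_simp
      · calc |c| ≤ L * q ^ L := hc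
          _ ≤ (L + 1 : ℕ) * q ^ (L + 1) := by
              have h0 : (0:ℤ) ≤ (q:ℤ) ^ (L+1) := by positivity
              push_cast
              linarith


/-- In BS(1,q) with q ≥ 2, if x = t^{-m} a^N t^n in normal form, N ≠ 0 and k = ‖x‖,
then m + n ≤ k and log|N| ≤ (2 log q + 1)k; hence m + n + log|N| ≤ (2 log q + 2)‖x‖. -/
theorem stmt3 (q : ℕ) (hq : 2 ≤ q) (m n : ℕ) (N : ℤ) (hN : N ≠ 0)
    (hnf : m ≠ 0 → n ≠ 0 → ¬ ((q : ℤ) ∣ N))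
    (x : BS 1 q) (hx : x = (BS.t 1 q)⁻¹ ^ m * BS.a 1 q ^ N * BS.t 1 q ^ n)
    (k : ℕ) (hk : k = wlen 1 q x) :
    m + n ≤ k ∧
    Real.log |(N : ℝ)| ≤ (2 * Real.log q + 1) * k ∧
    (m : ℝ) + n + Real.log |(N : ℝ)| ≤ (2 * Real.log q + 2) * (wlen 1 q x) := by
  have hq0 : (q : ℝ) ≠ 0 := by positivity
  have hqZ1 : (1 : ℤ) ≤ (q : ℤ) := by exact_mod_cast Nat.one_le_of_lt hq
  set u : ℝˣ := Units.mk0 (q : ℝ) hq0 with hudef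
  have hu : (u : ℝ) = (q : ℝ) := rfl
  -- the defining set of wlen is nonempty
  have hne : {r | ∃ l : List (BS 1 q), l.length = r ∧ (∀ g ∈ l, g ∈ genSet 1 q) ∧
      l.prod = x}.Nonempty := by
    refine ⟨m + N.natAbs + n,
      List.replicate m ((BS.t 1 q)⁻¹) ++
        List.replicate N.natAbs (if 0 ≤ N then BS.a 1 q else (BS.a 1 q)⁻¹) ++
        List.replicate n (BS.t 1 q), by simp [Nat.add_assoc], ?_, ?_⟩
    · intro g hg
      simp only [List.mem_append, List.mem_replicate] at hg
      rcases hg with (⟨_, h⟩ | ⟨_, h⟩) | ⟨_, h⟩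
      · subst h; simp [genSet]
      · subst h; split_ifs <;> simp [genSet]
      · subst h; simp [genSet]
    · rw [List.prod_append, List.prod_append, List.prod_replicate, List.prod_replicate,
        List.prod_replicate, hx]
      congr 1
      congr 1
      split_ifs with h
      · rw [← zpow_natCast, Int.natAbs_of_nonneg h]
      · rw [inv_pow, ← zpow_natCast, ← zpow_neg]
        congr 1
        omega
  -- extract a minimal-length word
  have hkmem : k ∈ {r | ∃ l : List (BS 1 q), l.length = r ∧ (∀ g ∈ l, g ∈ genSet 1 q) ∧
      l.prod = x} := by
    rw [hk, wlen]
    exact Nat.sInf_mem hne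
  obtain ⟨l, hlen, hgen, hprod⟩ := hkmem
  -- push forward via φ
  set F := φ q hu with hF
  have hFx : F x = ⟨(n : ℤ) - m, (N : ℝ) * (q : ℝ) ^ (-(m : ℤ))⟩ := by
    rw [hx, map_mul, map_mul, map_pow, map_inv, map_zpow, map_pow, φ_a, φ_t, QA.t_pow,
      QA.a_zpow]
    ext
    · simp [QA.t_pow]
      ring
    · simp [QA.t_pow, hu]
      ring
  have hmap : ∀ g' ∈ l.map F, g' = (⟨0, 1⟩ : QA u) ∨ g' = (⟨0, 1⟩ : QA u)⁻¹ ∨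
      g' = (⟨1, 0⟩ : QA u) ∨ g' = (⟨1, 0⟩ : QA u)⁻¹ := by
    intro g' hg'
    obtain ⟨g, hg, rfl⟩ := List.mem_map.1 hg'
    have := hgen g hg
    simp only [genSet, Set.mem_insert_iff, Set.mem_singleton_iff] at this
    rcases this with h | h | h | h <;> subst h <;>
      simp [map_inv, φ_a q hu, φ_t q hu, hF]
  obtain ⟨P, M, c, hPM, he, hb, hcb⟩ := key q hq hu (l.map F) hmap
  rw [List.length_map, hlen] at hPM hcb
  rw [← map_list_prod F l, hprod, hFx] at he hb
  simp only at he hb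
  -- convert hb to an integer identity
  have hNc : N * (q : ℤ) ^ M = c * (q : ℤ) ^ m := by
    have h2 : (q : ℝ) ^ (-(m : ℤ)) = ((q : ℝ) ^ m)⁻¹ := by
      rw [zpow_neg, zpow_natCast]
    rw [h2] at hb
    have h3 : (N : ℝ) * (q : ℝ) ^ M = (c : ℝ) * (q : ℝ) ^ m := by
      field_simp at hb
      linarith [hb]
    exact_mod_cast h3
  -- part 1
  have part1 : m + n ≤ k := by
    by_cases hm : m = 0
    · omega
    by_cases hn : n = 0
    · omega
    have hdvd := hnf hm hn
    have hMm : m ≤ M := by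
      by_contra h
      push_neg at h
      apply hdvd
      have hsplit : (q : ℤ) ^ m = (q : ℤ) ^ (m - M) * (q : ℤ) ^ M := by
        rw [← pow_add]
        congr 1
        omega
      have hcancel : N = c * (q : ℤ) ^ (m - M) :=
        mul_right_cancel₀ (pow_ne_zero M (by omega : (q : ℤ) ≠ 0))
          (by rw [hNc, hsplit]; ring)
      rw [hcancel]
      exact Dvd.dvd.mul_left (dvd_pow_self (q : ℤ) (by omega)) c
    omega
  -- part 2 : integer bound on |N|
  have hmk : m ≤ k := by omega
  have hNle : |N| ≤ (k : ℤ) * (q : ℤ) ^ (2 * k) := by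
    have habs : |N| * (q : ℤ) ^ M = |c| * (q : ℤ) ^ m := by
      have := congrArg abs hNc
      rwa [abs_mul, abs_mul, abs_pow, abs_pow, abs_of_nonneg (by omega : (0:ℤ) ≤ (q:ℤ))]
        at this
    have h1 : |N| ≤ |N| * (q : ℤ) ^ M :=
      le_mul_of_one_le_right (abs_nonneg N) (one_le_pow₀ hqZ1)
    calc |N| ≤ |N| * (q : ℤ) ^ M := h1
      _ = |c| * (q : ℤ) ^ m := habs
      _ ≤ ((k : ℤ) * (q : ℤ) ^ k) * (q : ℤ) ^ m := by
          apply mul_le_mul_of_nonneg_right hcb (by positivity)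
      _ ≤ ((k : ℤ) * (q : ℤ) ^ k) * (q : ℤ) ^ k := by
          apply mul_le_mul_of_nonneg_left (pow_le_pow_right₀ hqZ1 hmk) (by positivity)
      _ = (k : ℤ) * (q : ℤ) ^ (2 * k) := by rw [mul_assoc, ← pow_add]; ring_nf
  -- k ≥ 1
  have hk1 : 1 ≤ k := by
    by_contra h
    push_neg at h
    interval_cases k
    simp at hNle
    exact hN (by omega : N = 0)
  -- part 2 : log bound
  have hqR1 : (1 : ℝ) ≤ (q : ℝ) := by exact_mod_cast Nat.one_le_of_lt hq
  have hNabs : |(N : ℝ)| = ((|N| : ℤ) : ℝ) := by push_cast; rfl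
  have hNpos : (0 : ℝ) < |(N : ℝ)| := by
    rw [hNabs]
    exact_mod_cast abs_pos.2 hN
  have hlog : Real.log |(N : ℝ)| ≤ Real.log ((k : ℝ) * (q : ℝ) ^ (2 * k)) := by
    apply Real.log_le_log hNpos
    rw [hNabs]
    exact_mod_cast hNle
  rw [Real.log_mul (by positivity) (by positivity), Real.log_pow] at hlog
  have hlogk : Real.log k ≤ (k : ℝ) := by
    have := Real.log_le_sub_one_of_pos (x := (k : ℝ)) (by exact_mod_cast hk1)
    linarith
  have part2 : Real.log |(N : ℝ)| ≤ (2 * Real.log q + 1) * k := by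
    push_cast at hlog
    nlinarith [hlog, hlogk]
  refine ⟨part1, part2, ?_⟩
  rw [← hk]
  have hmn : (m : ℝ) + n ≤ k := by exact_mod_cast part1
  nlinarith [part2, hmn]
end

section
/- In BS(p,p) = ⟨a,t | t a^p t⁻¹ = a^p⟩ with p ≥ 1, if x has normal form w(a,t)·a^N where w is a freely reduced word over {a^j t^{±1} : 0 ≤ j < p} ending in t^{±1} (or empty), then the word length of x with respect to {a^{±1}, t^{±1}} satisfies (1/(2p))(|w| + |N|) ≤ ‖x‖ ≤ |w| + |N|. -/
set_option linter.dupNamespace false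


open FreeGroup in
theorem my_norm_map_le {α β : Type*} [DecidableEq α] [DecidableEq β] (f : α → β)
    (x : FreeGroup α) : (FreeGroup.map f x).norm ≤ x.norm := by
  conv_lhs => rw [← FreeGroup.mk_toWord (x := x), FreeGroup.map.mk]
  exact le_trans FreeGroup.norm_mk_le (by simp [FreeGroup.norm])

open FreeGroup in
theorem my_norm_congr {α β : Type*} [DecidableEq α] [DecidableEq β] (e : α ≃ β)
    (x : FreeGroup α) : (FreeGroup.freeGroupCongr e x).norm = x.norm := by
  refine le_antisymm (my_norm_map_le e x) ?_
  have h2 : x.norm = (FreeGroup.map e.symm (FreeGroup.freeGroupCongr e x)).norm := by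
    rw [freeGroupCongr_apply, map.comp]
    simp
  rw [h2]
  exact my_norm_map_le _ _


open FreeGroup in
theorem my_reduce_chain {α : Type*} [DecidableEq α] (L : List (α × Bool))
    (h : L.Chain' (fun a b => ¬(b.1 = a.1 ∧ b.2 = !a.2))) : FreeGroup.reduce L = L := by
  induction L with
  | nil => rfl
  | cons x L ih =>
    have hL : FreeGroup.reduce L = L := ih h.tail
    rw [FreeGroup.reduce.cons, hL]
    cases L with
    | nil => rfl
    | cons y tl =>
      have hxy : ¬(y.1 = x.1 ∧ y.2 = !x.2) := List.isChain_cons_cons.1 h |>.1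
      simp only []
      rw [if_neg]
      intro ⟨h1, h2⟩
      exact hxy ⟨h1.symm, by rw [h2, Bool.not_not]⟩


namespace S11

def σ (p : ℕ) : MulAut (FreeGroup (ZMod p)) := FreeGroup.freeGroupCongr (Equiv.addRight (1 : ZMod p))

def sh (p : ℕ) : Multiplicative ℤ →* MulAut (FreeGroup (ZMod p)) := zpowersHom _ (σ p)

abbrev HH (p : ℕ) := SemidirectProduct (FreeGroup (ZMod p)) (Multiplicative ℤ) (sh p)

lemma sigma_pow_mk (p : ℕ) (n : ℕ) (L : List (ZMod p × Bool)) :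
    ((σ p) ^ n) (FreeGroup.mk L) = FreeGroup.mk (L.map fun s => (s.1 + (n : ZMod p), s.2)) := by
  induction n with
  | zero => simp
  | succ n ih =>
    rw [pow_succ']
    have h : ((σ p * (σ p) ^ n)) (FreeGroup.mk L) = (σ p) (((σ p) ^ n) (FreeGroup.mk L)) := rfl
    rw [h, ih]
    have h2 : (σ p) (FreeGroup.mk (L.map fun s => (s.1 + (n : ZMod p), s.2)))
        = FreeGroup.map (Equiv.addRight (1 : ZMod p)) (FreeGroup.mk (L.map fun s => (s.1 + (n : ZMod p), s.2))) := rfl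
    rw [h2, FreeGroup.map.mk, List.map_map]
    congr 1
    refine List.map_congr_left fun s _ => ?_
    simp [Equiv.addRight, Nat.cast_succ]
    ring

lemma sigma_zpow_mk (p : ℕ) (n : ℕ) (L : List (ZMod p × Bool)) :
    ((σ p) ^ (n : ℤ)) (FreeGroup.mk L) = FreeGroup.mk (L.map fun s => (s.1 + (n : ZMod p), s.2)) := by
  rw [zpow_natCast]; exact sigma_pow_mk p n L

lemma norm_sigma_zpow (p : ℕ) (n : ℤ) (x : FreeGroup (ZMod p)) :
    (((σ p) ^ n) x).norm = x.norm := by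
  induction n using Int.induction_on generalizing x with
  | zero => simp
  | succ n ih =>
    rw [zpow_add_one]
    have h : ((σ p ^ (n:ℤ) * σ p)) x = (σ p ^ (n:ℤ)) ((σ p) x) := rfl
    rw [h, ih]
    exact my_norm_congr _ _
  | pred n ih =>
    rw [zpow_sub_one]
    have h : ((σ p ^ (-n:ℤ) * (σ p)⁻¹)) x = (σ p ^ (-n:ℤ)) ((σ p)⁻¹ x) := rfl
    rw [h, ih]
    show ((FreeGroup.freeGroupCongr (Equiv.addRight (1:ZMod p))).symm x).norm = _
    rw [FreeGroup.freeGroupCongr_symm]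
    exact my_norm_congr _ _

def fgen (p : ℕ) : Bool → HH p := fun b =>
  if b then SemidirectProduct.inl (FreeGroup.of (0 : ZMod p))
  else SemidirectProduct.inr (Multiplicative.ofAdd 1)

lemma sh_apply (p : ℕ) (n : ℤ) (x : FreeGroup (ZMod p)) :
    (sh p (Multiplicative.ofAdd n)) x = ((σ p) ^ n) x := rfl

lemma relcheck (p : ℕ) : ∀ r ∈ bsRel p p, FreeGroup.lift (fgen p) r = 1 := by
  intro r hr
  rcases hr with rfl
  simp only [map_mul, map_pow, map_inv, FreeGroup.lift_apply_of, fgen, if_true, Bool.false_eq_true,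
    if_false]
  have hA : (SemidirectProduct.inr (Multiplicative.ofAdd (1:ℤ)) : HH p) ^ p
      = SemidirectProduct.inr (Multiplicative.ofAdd (p : ℤ)) := by
    rw [← map_pow]
    congr 1
    simp [← ofAdd_nsmul]
  rw [hA]
  have hfix : (sh p (Multiplicative.ofAdd (p:ℤ))) (FreeGroup.of (0 : ZMod p))
      = FreeGroup.of (0 : ZMod p) := by
    have h0 : FreeGroup.of (0 : ZMod p) = FreeGroup.mk [((0:ZMod p), true)] := rfl
    rw [h0, sh_apply, sigma_zpow_mk]
    simp
  have hc : SemidirectProduct.inr (Multiplicative.ofAdd (p:ℤ))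
        * SemidirectProduct.inl (FreeGroup.of (0 : ZMod p))
      = SemidirectProduct.inl (FreeGroup.of (0 : ZMod p))
        * (SemidirectProduct.inr (Multiplicative.ofAdd (p:ℤ)) : HH p) := by
    ext
    · simp [SemidirectProduct.mul_left, hfix]
    · simp [SemidirectProduct.mul_right]
  rw [mul_assoc (SemidirectProduct.inl (FreeGroup.of (0:ZMod p)))]
  rw [← mul_assoc, ← hc, mul_assoc, mul_assoc]
  simp

noncomputable def Φ (p : ℕ) : BS p p →* HH p := PresentedGroup.toGroup (relcheck p)

lemma Φ_a (p : ℕ) : Φ p (BS.a p p) = SemidirectProduct.inr (Multiplicative.ofAdd 1) := by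
  show PresentedGroup.toGroup (relcheck p) (PresentedGroup.of false) = _
  rw [PresentedGroup.toGroup.of]
  simp [fgen]

lemma Φ_t (p : ℕ) : Φ p (BS.t p p) = SemidirectProduct.inl (FreeGroup.of (0 : ZMod p)) := by
  show PresentedGroup.toGroup (relcheck p) (PresentedGroup.of true) = _
  rw [PresentedGroup.toGroup.of]
  simp [fgen]

/-- letters of the image word, with running offset `c`. -/
def letters (p : ℕ) : ZMod p → List (ℕ × Bool) → List (ZMod p × Bool)
  | _, [] => []
  | c, s :: rest => (c + s.1, s.2) :: letters p (c + s.1) rest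

lemma letters_length (p : ℕ) (w : List (ℕ × Bool)) : ∀ c, (letters p c w).length = w.length := by
  induction w with
  | nil => intro c; rfl
  | cons s rest ih => intro c; simp [letters, ih]

lemma letters_shift (p : ℕ) (w : List (ℕ × Bool)) : ∀ c d : ZMod p,
    (letters p c w).map (fun s => (s.1 + d, s.2)) = letters p (c + d) w := by
  induction w with
  | nil => intro c d; rfl
  | cons s rest ih =>
    intro c d
    simp only [letters, List.map_cons, ih]
    congr 2
    · ring
    · ring_nf

lemma inv_of_mk (p : ℕ) : (FreeGroup.of (0:ZMod p))⁻¹ = FreeGroup.mk [((0:ZMod p), false)] := by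
  have h0 : FreeGroup.of (0 : ZMod p) = FreeGroup.mk [((0:ZMod p), true)] := rfl
  rw [h0, FreeGroup.inv_mk]
  rfl

lemma phi_w (p : ℕ) (w : List (ℕ × Bool)) :
    Φ p ((w.map (syl p p)).prod)
      = ⟨FreeGroup.mk (letters p 0 w), Multiplicative.ofAdd (((w.map (fun s => s.1)).sum : ℕ) : ℤ)⟩ := by
  induction w with
  | nil => simp [letters]; rfl
  | cons s rest ih =>
    rw [List.map_cons, List.prod_cons, map_mul, ih]
    have hpow : Φ p (BS.a p p ^ s.1)
        = SemidirectProduct.inr (Multiplicative.ofAdd (s.1 : ℤ)) := by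
      rw [map_pow, Φ_a, ← map_pow]
      congr 1
      simp [← ofAdd_nsmul]
    have hone : ∀ v : FreeGroup (ZMod p),
        Φ p (BS.a p p ^ s.1) * SemidirectProduct.inl v
          = (⟨(sh p (Multiplicative.ofAdd (s.1 : ℤ))) v, Multiplicative.ofAdd (s.1 : ℤ)⟩ : HH p) := by
      intro v
      rw [hpow]
      ext
      · simp [SemidirectProduct.mul_left]
      · simp [SemidirectProduct.mul_right]
    have hsyl : Φ p (syl p p s)
        = (⟨(sh p (Multiplicative.ofAdd (s.1 : ℤ))) (FreeGroup.mk [((0:ZMod p), s.2)]),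
           Multiplicative.ofAdd (s.1 : ℤ)⟩ : HH p) := by
      rw [syl, map_mul]
      cases hs2 : s.2
      · simp only [if_false, Bool.false_eq_true, map_inv, Φ_t]
        rw [show (SemidirectProduct.inl (FreeGroup.of (0:ZMod p)) : HH p)⁻¹
            = SemidirectProduct.inl (FreeGroup.of (0:ZMod p))⁻¹ from (map_inv _ _).symm,
          inv_of_mk p, hone]
      · simp only [if_true, Φ_t, hone]
        rfl
    rw [hsyl]
    refine SemidirectProduct.ext ?_ ?_
    · simp only [SemidirectProduct.mul_left]
      rw [← map_mul]
      have hmul : FreeGroup.mk [((0:ZMod p), s.2)] * FreeGroup.mk (letters p 0 rest)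
          = FreeGroup.mk (((0:ZMod p), s.2) :: letters p 0 rest) := by
        rw [FreeGroup.mul_mk]; rfl
      rw [hmul, sh_apply, sigma_zpow_mk]
      show _ = FreeGroup.mk (letters p 0 (s :: rest))
      simp only [letters, List.map_cons]
      rw [letters_shift]
    · simp only [SemidirectProduct.mul_right, List.map_cons, List.sum_cons]
      rw [← ofAdd_add]
      norm_num

lemma phi_x (p : ℕ) (w : List (ℕ × Bool)) (N : ℤ) :
    Φ p ((w.map (syl p p)).prod * BS.a p p ^ N)
      = ⟨FreeGroup.mk (letters p 0 w),
         Multiplicative.ofAdd ((((w.map (fun s => s.1)).sum : ℕ) : ℤ) + N)⟩ := by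
  rw [map_mul, phi_w, map_zpow, Φ_a]
  have hz : (SemidirectProduct.inr (Multiplicative.ofAdd (1:ℤ)) : HH p) ^ N
      = SemidirectProduct.inr (Multiplicative.ofAdd N) := by
    rw [← map_zpow]
    congr 1
    simp [← ofAdd_zsmul]
  rw [hz]
  refine SemidirectProduct.ext ?_ ?_
  · simp [SemidirectProduct.mul_left]
  · rw [SemidirectProduct.mul_right]
    show Multiplicative.ofAdd _ * Multiplicative.ofAdd N = _
    rw [← ofAdd_add]

lemma chain_letters (p : ℕ) (hp : 1 ≤ p) (w : List (ℕ × Bool)) (hw : ∀ s ∈ w, s.1 < p)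
    (hred : w.Chain' (fun s s' => s'.1 = 0 → s'.2 = s.2)) (c : ZMod p) :
    (letters p c w).Chain' (fun a b => ¬(b.1 = a.1 ∧ b.2 = !a.2)) := by
  induction w generalizing c with
  | nil => exact List.isChain_nil
  | cons s rest ih =>
    have : NeZero p := ⟨by omega⟩
    rw [letters]
    cases rest with
    | nil => simp [letters]; exact List.isChain_singleton _
    | cons s' rest' =>
      rw [letters]; unfold List.Chain'; rw [List.isChain_cons_cons]
      constructor
      · rintro ⟨h1, h2⟩
        simp only [letters] at h1
        have hz : ((s'.1 : ZMod p)) = 0 := add_eq_left.mp h1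
        have hs' : s'.1 = 0 :=
          Nat.eq_zero_of_dvd_of_lt ((ZMod.natCast_eq_zero_iff s'.1 p).1 hz)
            (hw s' (by simp))
        have heq : s'.2 = s.2 := (List.isChain_cons_cons.1 hred).1 hs'
        have h2' : s'.2 = !s.2 := h2
        rw [heq] at h2'
        simp at h2'
      · have := ih (fun x hx => hw x (List.mem_cons_of_mem _ hx)) (List.isChain_cons_cons.1 hred).2
          (c + s.1)
        simpa only [letters, List.Chain'] using this

lemma norm_sh (p : ℕ) (r : Multiplicative ℤ) (v : FreeGroup (ZMod p)) :
    ((sh p r) v).norm = v.norm := by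
  have : r = Multiplicative.ofAdd (Multiplicative.toAdd r) := rfl
  rw [this, sh_apply]
  exact norm_sigma_zpow p _ v

lemma step_inr (p : ℕ) (r : Multiplicative ℤ) (y : HH p) :
    ((SemidirectProduct.inr r) * y).left.norm = y.left.norm
      ∧ ((SemidirectProduct.inr r) * y).right = r * y.right := by
  constructor
  · rw [SemidirectProduct.mul_left]
    simp only [SemidirectProduct.left_inr, one_mul]
    exact norm_sh p r y.left
  · rw [SemidirectProduct.mul_right, SemidirectProduct.right_inr]

lemma step_inl (p : ℕ) (v : FreeGroup (ZMod p)) (y : HH p) :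
    ((SemidirectProduct.inl v) * y).left.norm ≤ v.norm + y.left.norm
      ∧ ((SemidirectProduct.inl v) * y).right = y.right := by
  constructor
  · rw [SemidirectProduct.mul_left]
    simp only [SemidirectProduct.left_inl, SemidirectProduct.right_inl, map_one,
      MulAut.one_apply]
    exact FreeGroup.norm_mul_le _ _
  · rw [SemidirectProduct.mul_right, SemidirectProduct.right_inl, one_mul]

lemma list_bound (p : ℕ) (l : List (BS p p)) (hl : ∀ g ∈ l, g ∈ genSet p p) :
    (Φ p l.prod).left.norm ≤ l.length
      ∧ (Multiplicative.toAdd (Φ p l.prod).right).natAbs ≤ l.length := by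
  induction l with
  | nil =>
    simp only [List.prod_nil, map_one, List.length_nil]
    constructor
    · rw [SemidirectProduct.one_left]; simp
    · rw [SemidirectProduct.one_right]; simp
  | cons g l ih =>
    have hg := hl g List.mem_cons_self
    have ihl := ih (fun x hx => hl x (List.mem_cons_of_mem _ hx))
    rw [List.prod_cons, map_mul, List.length_cons]
    have hcases : Φ p g = SemidirectProduct.inr (Multiplicative.ofAdd 1)
        ∨ Φ p g = SemidirectProduct.inr (Multiplicative.ofAdd (-1))
        ∨ Φ p g = SemidirectProduct.inl (FreeGroup.of (0 : ZMod p))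
        ∨ Φ p g = SemidirectProduct.inl (FreeGroup.of (0 : ZMod p))⁻¹ := by
      simp only [genSet, Set.mem_insert_iff, Set.mem_singleton_iff] at hg
      rcases hg with rfl | rfl | rfl | rfl
      · exact Or.inl (Φ_a p)
      · refine Or.inr (Or.inl ?_)
        rw [map_inv, Φ_a, ← map_inv]
        rfl
      · exact Or.inr (Or.inr (Or.inl (Φ_t p)))
      · refine Or.inr (Or.inr (Or.inr ?_))
        rw [map_inv, Φ_t, ← map_inv]
    rcases hcases with h | h | h | h
    all_goals rw [h]
    · refine ⟨?_, ?_⟩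
      · rw [(step_inr p _ _).1]; omega
      · rw [(step_inr p _ _).2]
        have : Multiplicative.toAdd (Multiplicative.ofAdd (1:ℤ) * (Φ p l.prod).right)
            = 1 + Multiplicative.toAdd ((Φ p l.prod).right) := rfl
        rw [this]
        have := Int.natAbs_add_le 1 (Multiplicative.toAdd ((Φ p l.prod).right))
        omega
    · refine ⟨?_, ?_⟩
      · rw [(step_inr p _ _).1]; omega
      · rw [(step_inr p _ _).2]
        have : Multiplicative.toAdd (Multiplicative.ofAdd (-1:ℤ) * (Φ p l.prod).right)
            = -1 + Multiplicative.toAdd ((Φ p l.prod).right) := rfl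
        rw [this]
        have := Int.natAbs_add_le (-1) (Multiplicative.toAdd ((Φ p l.prod).right))
        simp at this
        omega
    · refine ⟨?_, ?_⟩
      · have := (step_inl p (FreeGroup.of (0:ZMod p)) (Φ p l.prod)).1
        rw [FreeGroup.norm_of] at this
        omega
      · rw [(step_inl p _ _).2]; omega
    · refine ⟨?_, ?_⟩
      · have := (step_inl p (FreeGroup.of (0:ZMod p))⁻¹ (Φ p l.prod)).1
        rw [FreeGroup.norm_inv_eq, FreeGroup.norm_of] at this
        omega
      · rw [(step_inl p _ _).2]; omega

lemma norm_phi_left (p : ℕ) (hp : 1 ≤ p) (w : List (ℕ × Bool)) (hw : ∀ s ∈ w, s.1 < p)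
    (hred : w.Chain' (fun s s' => s'.1 = 0 → s'.2 = s.2)) :
    (FreeGroup.mk (letters p 0 w)).norm = w.length := by
  rw [FreeGroup.norm, FreeGroup.toWord_mk, my_reduce_chain _ (chain_letters p hp w hw hred 0),
    letters_length]

lemma sum_map_add_one (w : List (ℕ × Bool)) :
    (w.map (fun s => s.1 + 1)).sum = (w.map (fun s => s.1)).sum + w.length := by
  induction w with
  | nil => simp
  | cons s rest ih => simp [ih]; omega

end S11

/-- In BS(p,p) with p ≥ 1, if x = w(a,t)·a^N with w a freely reduced word over
{a^j t^{±1} : 0 ≤ j < p}, then (1/(2p))(|w| + |N|) ≤ ‖x‖ ≤ |w| + |N|,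
where |w| is the length of w in the letters a, t. -/
theorem stmt11 (p : ℕ) (hp : 1 ≤ p)
    (w : List (ℕ × Bool)) (hw : ∀ s ∈ w, s.1 < p)
    (hred : w.Chain' (fun s s' => s'.1 = 0 → s'.2 = s.2))
    (N : ℤ) (x : BS p p)
    (hx : x = (w.map (syl p p)).prod * BS.a p p ^ N) :
    (1 / (2 * (p : ℝ))) * ((((w.map (fun s => s.1 + 1)).sum : ℕ) : ℝ) + |(N : ℝ)|)
        ≤ (wlen p p x : ℝ) ∧
    wlen p p x ≤ (w.map (fun s => s.1 + 1)).sum + N.natAbs := by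
  classical
  set S := {n | ∃ l : List (BS p p), l.length = n ∧ (∀ g ∈ l, g ∈ genSet p p) ∧ l.prod = x} with hS
  -- the explicit representative
  set rl : List (BS p p) :=
    (w.map fun s => List.replicate s.1 (BS.a p p)
        ++ [if s.2 then BS.t p p else (BS.t p p)⁻¹]).flatten
      ++ List.replicate N.natAbs (if 0 ≤ N then BS.a p p else (BS.a p p)⁻¹) with hrl
  have hlen : rl.length = (w.map (fun s => s.1 + 1)).sum + N.natAbs := by
    rw [hrl, List.length_append, List.length_flatten, List.length_replicate, List.map_map]
    congr 1
    congr 1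
    refine List.map_congr_left fun s _ => ?_
    simp
  have hmem : ∀ g ∈ rl, g ∈ genSet p p := by
    intro g hg
    rw [hrl] at hg
    rcases List.mem_append.1 hg with h | h
    · rcases List.mem_flatten.1 h with ⟨L, hL, hgL⟩
      rcases List.mem_map.1 hL with ⟨s, _, rfl⟩
      rcases List.mem_append.1 hgL with h2 | h2
      · rw [List.eq_of_mem_replicate h2]
        exact Or.inl rfl
      · rcases List.mem_singleton.1 h2 with rfl
        by_cases hs : s.2 <;> simp [hs, genSet]
    · rw [List.eq_of_mem_replicate h]
      by_cases hN : 0 ≤ N <;> simp [hN, genSet]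
  have hprod : rl.prod = x := by
    rw [hrl, List.prod_append, List.prod_flatten, List.map_map, hx]
    congr 1
    · congr 1
      refine List.map_congr_left fun s _ => ?_
      simp only [Function.comp_apply, List.prod_append, List.prod_replicate,
        List.prod_singleton]
      rfl
    · rw [List.prod_replicate]
      by_cases hN : 0 ≤ N
      · rw [if_pos hN, ← zpow_natCast]
        congr 1
        omega
      · rw [if_neg hN, inv_pow, ← zpow_natCast, ← zpow_neg]
        congr 1
        omega
  have hSmem : ((w.map (fun s => s.1 + 1)).sum + N.natAbs) ∈ S := ⟨rl, hlen, hmem, hprod⟩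
  have hupper : wlen p p x ≤ (w.map (fun s => s.1 + 1)).sum + N.natAbs := Nat.sInf_le hSmem
  -- lower bound
  have hwlen_mem : wlen p p x ∈ S := Nat.sInf_mem ⟨_, hSmem⟩
  obtain ⟨l, hl_len, hl_mem, hl_prod⟩ := hwlen_mem
  have hb := S11.list_bound p l hl_mem
  rw [hl_prod, hx, S11.phi_x] at hb
  simp only [S11.norm_phi_left p hp w hw hred, toAdd_ofAdd] at hb
  obtain ⟨h1, h2⟩ := hb
  rw [hl_len] at h1 h2
  refine ⟨?_, hupper⟩
  have hsum1 := S11.sum_map_add_one w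
  have hsum2 : (w.map (fun s => s.1)).sum ≤ w.length * (p - 1) := by
    have := List.sum_le_card_nsmul (w.map (fun s => s.1)) (p - 1)
      (fun x hx => by
        rcases List.mem_map.1 hx with ⟨s, hs, rfl⟩
        have := hw s hs; omega)
    simpa using this
  -- real arithmetic
  set n : ℕ := wlen p p x with hn
  set Sn : ℕ := (w.map (fun s => s.1)).sum with hSn
  have c1 : (w.length : ℝ) ≤ (n : ℝ) := by exact_mod_cast h1
  have c2 : |((Sn : ℤ) : ℝ) + (N : ℝ)| ≤ (n : ℝ) := by
    have : ((((Sn : ℤ) + N).natAbs : ℤ) : ℝ) ≤ (n : ℝ) := by exact_mod_cast h2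
    rw [Nat.cast_natAbs] at this
    push_cast at this ⊢
    exact this
  have c3 : ((Sn : ℤ) : ℝ) ≤ ((p : ℝ) - 1) * (w.length : ℝ) := by
    have h1p : (1 : ℝ) ≤ (p : ℝ) := by exact_mod_cast hp
    have : (Sn : ℝ) ≤ ((w.length * (p - 1) : ℕ) : ℝ) := by exact_mod_cast hsum2
    rw [Nat.cast_mul, Nat.cast_sub hp] at this
    push_cast at this ⊢
    linarith
  have c4 : |(N : ℝ)| ≤ (n : ℝ) + ((Sn : ℤ) : ℝ) := by
    have h5 : (N : ℝ) = (((Sn : ℤ) : ℝ) + (N : ℝ)) - ((Sn : ℤ) : ℝ) := by ring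
    rw [h5, sub_eq_add_neg]
    refine le_trans (abs_add_le _ _) ?_
    rw [abs_neg, abs_of_nonneg (show (0:ℝ) ≤ ((Sn : ℤ) : ℝ) by positivity)]
    linarith [c2]
  have hp1 : (1 : ℝ) ≤ (p : ℝ) := by exact_mod_cast hp
  have e3 : (2 * (p : ℝ) - 1) * (w.length : ℝ) ≤ (2 * (p : ℝ) - 1) * (n : ℝ) :=
    mul_le_mul_of_nonneg_left c1 (by linarith)
  rw [div_mul_eq_mul_div, one_mul, div_le_iff₀ (by positivity)]
  have hcast : (((w.map (fun s => s.1 + 1)).sum : ℕ) : ℝ) = ((Sn : ℤ) : ℝ) + (w.length : ℝ) := by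
    rw [hsum1]
    push_cast
    ring
  rw [hcast]
  nlinarith [c3, c4, e3, c2]
end

section
/- In BS(p,q) with 1 ≤ p < q, if x has normal form w(a,t)·a^N then there are constants C₁ = 1/(q+1) and D₁ = log_{q/p}(2qp/(q−p)) such that C₁·|w| ≤ ‖x‖ + D₁ and C₁·log_{q/p}(|N|+1) ≤ ‖x‖ + D₁; more precisely |w| ≤ q·‖x‖ and log_{q/p}(|N|+1) ≤ ‖x‖ + log_{q/p}(2qp/(q−p)). -/
namespace BSAux

/-- length measure: number of letters in the syllable word -/
def LenW (w : List (ℕ × Bool)) : ℕ := (w.map (fun s => s.1 + 1)).sum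

/-- reducedness relation -/
def Rr : (ℕ × Bool) → (ℕ × Bool) → Prop := fun s s' => s'.1 = 0 → s'.2 = s.2

/-- validity of a normal form word for BS(p,q) -/
def OkW (p q : ℕ) (w : List (ℕ × Bool)) : Prop :=
  (∀ s ∈ w, s.1 < if s.2 then q else p) ∧ w.Chain' Rr

/-- orientation-generic exponent-range predicate -/
def OrW (m n : ℕ) (b : Bool) (w : List (ℕ × Bool)) : Prop :=
  ∀ s ∈ w, s.1 < if s.2 = b then n else m

lemma orW_true {p q : ℕ} {w : List (ℕ × Bool)} :
    OrW p q true w ↔ ∀ s ∈ w, s.1 < if s.2 then q else p := by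
  unfold OrW; simp

lemma orW_false {p q : ℕ} {w : List (ℕ × Bool)} :
    OrW q p false w ↔ ∀ s ∈ w, s.1 < if s.2 then q else p := by
  unfold OrW
  constructor <;> intro h s hs <;> have := h s hs <;> cases hb : s.2 <;> simp [hb] at this ⊢ <;> exact this

/-- right multiplication by `t`-like letter: modulus n, multiplier m, appends bool b. -/
def step (m n : ℕ) (b : Bool) (v : List (ℕ × Bool) × ℤ) : List (ℕ × Bool) × ℤ :=
  if v.2 % (n : ℤ) = 0 ∧ v.1.getLast?.map Prod.snd = some (!b) then
    (v.1.dropLast, ((v.1.getLast?.map Prod.fst).getD 0 : ℕ) + (m : ℤ) * (v.2 / (n : ℤ)))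
  else (v.1 ++ [((v.2 % (n : ℤ)).toNat, b)], (m : ℤ) * (v.2 / (n : ℤ)))

/-- the key cancellation identity -/
lemma step_step (m n : ℕ) (b : Bool) (hm : 0 < m) (hn : 0 < n)
    (v : List (ℕ × Bool) × ℤ) (H1 : OrW m n b v.1) (H2 : v.1.Chain' Rr) (k : ℤ) :
    step n m (!b) ((step m n b v).1, (step m n b v).2 + (m : ℤ) * k) = (v.1, v.2 + (n : ℤ) * k) := by
  obtain ⟨w, N⟩ := v
  have hn' : (n : ℤ) ≠ 0 := by exact_mod_cast hn.ne'
  have hm' : (m : ℤ) ≠ 0 := by exact_mod_cast hm.ne'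
  have hdm : N = (n : ℤ) * (N / n) + N % n := (Int.mul_ediv_add_emod N n).symm
  by_cases hc : N % (n : ℤ) = 0 ∧ w.getLast?.map Prod.snd = some (!b)
  · -- cancel branch
    rcases List.eq_nil_or_concat w with rfl | ⟨u, s, rfl⟩
    · simp at hc
    rw [List.concat_eq_append] at *
    obtain ⟨j, b'⟩ := s
    have hb' : b' = !b := by simpa using hc.2
    subst hb'
    have hj : j < m := by
      have := H1 (j, !b) (by simp)
      simpa using this
    simp only [step, if_pos hc]
    simp only [List.getLast?_concat, List.dropLast_concat, Option.map_some, Option.getD_some]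
    -- now second step applied to (u, j + m*(N/n) + m*k)
    have hNval : (↑j + (m:ℤ) * (N / ↑n) + (m:ℤ) * k) = (↑j + (m:ℤ) * (N / ↑n + k)) := by ring
    have hjm : ((j:ℤ)) % (m:ℤ) = j := Int.emod_eq_of_lt (by positivity) (by exact_mod_cast hj)
    have hmod : (↑j + (m:ℤ) * (N / ↑n + k)) % (m:ℤ) = j := by
      rw [Int.add_mul_emod_self_left, hjm]
    have hdiv : (↑j + (m:ℤ) * (N / ↑n + k)) / (m:ℤ) = N / ↑n + k := by
      rw [Int.add_mul_ediv_left _ _ hm', Int.ediv_eq_zero_of_lt (by positivity) (by exact_mod_cast hj), zero_add]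
    have hN2 : N = (n:ℤ) * (N / n) := by omega
    rcases eq_or_ne j 0 with rfl | hj0
    · -- j = 0 : no cancellation in second step since u can't end with b
      have hult : u.getLast?.map Prod.snd ≠ some (!(!b)) := by
        rcases List.eq_nil_or_concat u with rfl | ⟨u', s', rfl⟩
        · simp
        rw [List.concat_eq_append]
        have hch : Rr s' (0, !b) := by
          simp only [List.Chain', List.isChain_append] at H2
          exact H2.2.2 s' (by simp) (0, !b) (by simp)
        have : s'.2 = !b := (hch rfl).symm
        simp [List.getLast?_concat, this]
      rw [if_neg (by rw [hNval]; rintro ⟨h1, h2⟩; exact hult h2)]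
      simp only [hNval, hmod, hdiv, Prod.mk.injEq]
      constructor
      · simp
      · rw [mul_add, ← hN2]
    · rw [if_neg (by rw [hNval]; rintro ⟨h1, h2⟩; rw [hmod] at h1; exact_mod_cast hj0 (by exact_mod_cast h1))]
      simp only [hNval, hmod, hdiv, Prod.mk.injEq]
      constructor
      · simp
      · rw [mul_add, ← hN2]
  · -- append branch
    have hr0 : 0 ≤ N % (n:ℤ) := Int.emod_nonneg N hn'
    simp only [step, if_neg hc]
    have hNval : ((m:ℤ) * (N / ↑n) + (m:ℤ) * k) = 0 + (m:ℤ) * (N / ↑n + k) := by ring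
    have hmod : ((m:ℤ) * (N / ↑n) + (m:ℤ) * k) % (m:ℤ) = 0 := by
      rw [hNval, Int.add_mul_emod_self_left]; simp
    have hdiv : ((m:ℤ) * (N / ↑n) + (m:ℤ) * k) / (m:ℤ) = N / ↑n + k := by
      rw [hNval, Int.add_mul_ediv_left _ _ hm']; simp
    rw [if_pos ⟨hmod, by simp [List.getLast?_concat]⟩]
    simp only [List.getLast?_concat, List.dropLast_concat, Option.map_some, Option.getD_some, hdiv, Prod.mk.injEq]
    refine ⟨trivial, ?_⟩
    rw [Int.toNat_of_nonneg hr0, mul_add]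
    linarith [Int.mul_ediv_add_emod N (n:ℤ)]

lemma step_ok (m n : ℕ) (b : Bool) (hn : 0 < n) (v : List (ℕ × Bool) × ℤ)
    (H1 : OrW m n b v.1) (H2 : v.1.Chain' Rr) :
    OrW m n b (step m n b v).1 ∧ (step m n b v).1.Chain' Rr := by
  obtain ⟨w, N⟩ := v
  have hn' : (n : ℤ) ≠ 0 := by exact_mod_cast hn.ne'
  by_cases hc : N % (n : ℤ) = 0 ∧ w.getLast?.map Prod.snd = some (!b)
  · simp only [step, if_pos hc]
    constructor
    · intro s hs; exact H1 s (List.dropLast_sublist w |>.mem hs)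
    · exact H2.prefix (List.dropLast_prefix w)
  · simp only [step, if_neg hc]
    have hrlt : ((N % (n:ℤ)).toNat) < n := by
      have := Int.emod_lt_of_pos N (b := (n:ℤ)) (by exact_mod_cast hn)
      omega
    constructor
    · intro s hs
      rcases List.mem_append.1 hs with h | h
      · exact H1 s h
      · simp at h; subst h; simpa using hrlt
    · simp only [List.Chain', List.isChain_append]
      refine ⟨H2, List.isChain_singleton _, ?_⟩
      intro x hx y hy
      simp at hy; subst hy
      intro h0
      simp only at h0
      have hr0 : N % (n:ℤ) = 0 := by
        have := Int.emod_nonneg N hn'; omega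
      by_contra hbb
      apply hc
      refine ⟨hr0, ?_⟩
      have hxl : w.getLast? = some x := hx
      rw [hxl]
      simp only [Option.map_some]
      congr 1
      cases b <;> cases hb : x.2 <;> simp_all

lemma step_len (m n : ℕ) (b : Bool) (hn : 0 < n) (v : List (ℕ × Bool) × ℤ) :
    LenW (step m n b v).1 ≤ LenW v.1 + n := by
  obtain ⟨w, N⟩ := v
  by_cases hc : N % (n : ℤ) = 0 ∧ w.getLast?.map Prod.snd = some (!b)
  · simp only [step, if_pos hc]
    have : LenW w.dropLast ≤ LenW w := by
      unfold LenW
      exact List.Sublist.sum_le_sum ((List.dropLast_sublist w).map _) (by intro x hx; positivity)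
    omega
  · simp only [step, if_neg hc]
    have hrlt : ((N % (n:ℤ)).toNat) < n := by
      have := Int.emod_lt_of_pos N (b := (n:ℤ)) (by exact_mod_cast hn)
      omega
    unfold LenW
    rw [List.map_append, List.sum_append]
    simp
    omega

lemma step_N (m n : ℕ) (b : Bool) (v : List (ℕ × Bool) × ℤ) (H1 : OrW m n b v.1) :
    (step m n b v).2 = (m:ℤ) * (v.2 / (n:ℤ)) ∨
      (v.2 % (n:ℤ) = 0 ∧ ∃ j : ℕ, j < m ∧ (step m n b v).2 = (j:ℤ) + (m:ℤ) * (v.2 / (n:ℤ))) := by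
  obtain ⟨w, N⟩ := v
  by_cases hc : N % (n : ℤ) = 0 ∧ w.getLast?.map Prod.snd = some (!b)
  · right
    refine ⟨hc.1, ?_⟩
    rcases List.eq_nil_or_concat w with rfl | ⟨u, s, rfl⟩
    · simp at hc
    rw [List.concat_eq_append] at *
    obtain ⟨j, b'⟩ := s
    have hb' : b' = !b := by simpa using hc.2
    subst hb'
    refine ⟨j, ?_, ?_⟩
    · have := H1 (j, !b) (by simp); simpa using this
    · simp only [step, if_pos hc]
      simp [List.getLast?_concat]
  · left
    simp only [step, if_neg hc]

lemma step_append (m n : ℕ) (b : Bool) (hn : 0 < n) (v : List (ℕ × Bool) × ℤ)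
    (h0 : 0 ≤ v.2) (h1 : v.2 < n)
    (h2 : v.2 = 0 → v.1.getLast?.map Prod.snd ≠ some (!b)) :
    step m n b v = (v.1 ++ [(v.2.toNat, b)], 0) := by
  obtain ⟨w, N⟩ := v
  have hmod : N % (n:ℤ) = N := Int.emod_eq_of_lt h0 h1
  have hdiv : N / (n:ℤ) = 0 := Int.ediv_eq_zero_of_lt h0 h1
  by_cases hN : N = 0
  · subst hN
    simp only [step]
    rw [if_neg (by rintro ⟨_, hh⟩; exact h2 rfl hh)]
    simp [hdiv]
  · simp only [step]
    rw [if_neg (by rintro ⟨hh, _⟩; rw [hmod] at hh; exact hN hh)]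
    simp [hmod, hdiv]

def NFt (p q : ℕ) := {v : List (ℕ × Bool) × ℤ // OkW p q v.1}

lemma okW_stepT {p q : ℕ} (hq : 0 < q) {v : List (ℕ × Bool) × ℤ} (H : OkW p q v.1) :
    OkW p q (step p q true v).1 := by
  have h := step_ok p q true hq v (orW_true.mpr H.1) H.2
  exact ⟨orW_true.mp h.1, h.2⟩

lemma okW_stepTi {p q : ℕ} (hp : 0 < p) {v : List (ℕ × Bool) × ℤ} (H : OkW p q v.1) :
    OkW p q (step q p false v).1 := by
  have h := step_ok q p false hp v (orW_false.mpr H.1) H.2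
  exact ⟨orW_false.mp h.1, h.2⟩

lemma stepTi_stepT {p q : ℕ} (hp : 0 < p) (hq : 0 < q) {v : List (ℕ × Bool) × ℤ}
    (H : OkW p q v.1) : step q p false (step p q true v) = v := by
  have h := step_step p q true hp hq v (orW_true.mpr H.1) H.2 0
  simpa using h

lemma stepT_stepTi {p q : ℕ} (hp : 0 < p) (hq : 0 < q) {v : List (ℕ × Bool) × ℤ}
    (H : OkW p q v.1) : step p q true (step q p false v) = v := by
  have h := step_step q p false hq hp v (orW_false.mpr H.1) H.2 0
  simpa using h

def permA (p q : ℕ) : Equiv.Perm (NFt p q) where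
  toFun v := ⟨(v.1.1, v.1.2 + 1), v.2⟩
  invFun v := ⟨(v.1.1, v.1.2 - 1), v.2⟩
  left_inv v := Subtype.ext (by simp)
  right_inv v := Subtype.ext (by simp)

def permT (p q : ℕ) (hp : 0 < p) (hq : 0 < q) : Equiv.Perm (NFt p q) where
  toFun v := ⟨step p q true v.1, okW_stepT hq v.2⟩
  invFun v := ⟨step q p false v.1, okW_stepTi hp v.2⟩
  left_inv v := Subtype.ext (stepTi_stepT hp hq v.2)
  right_inv v := Subtype.ext (stepT_stepTi hp hq v.2)

lemma permA_apply (p q : ℕ) (v : NFt p q) : (permA p q v).1 = (v.1.1, v.1.2 + 1) := rfl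

lemma permA_pow_apply (p q : ℕ) (k : ℕ) (v : NFt p q) :
    ((permA p q ^ k) v).1 = (v.1.1, v.1.2 + k) := by
  induction k generalizing v with
  | zero => simp
  | succ k ih =>
    rw [pow_succ', Equiv.Perm.mul_apply, permA_apply, ih v]
    simp only [Prod.mk.injEq]
    exact ⟨trivial, by push_cast; ring⟩

lemma permA_zpow_apply (p q : ℕ) (k : ℤ) (v : NFt p q) :
    ((permA p q ^ k) v).1 = (v.1.1, v.1.2 + k) := by
  obtain ⟨k, rfl | rfl⟩ := Int.eq_nat_or_neg k
  · rw [zpow_natCast]; simpa using permA_pow_apply p q k v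
  · rw [zpow_neg, zpow_natCast]
    set u := (permA p q ^ k)⁻¹ v with hu
    have h1 : (permA p q ^ k) u = v := Equiv.apply_symm_apply _ v
    have h2 := permA_pow_apply p q k u
    rw [h1] at h2
    rw [Prod.ext_iff] at h2 ⊢
    obtain ⟨e1, e2⟩ := h2
    exact ⟨e1.symm, by simp only at e2 ⊢; omega⟩

lemma permT_inv_apply (p q : ℕ) (hp : 0 < p) (hq : 0 < q) (v : NFt p q) :
    (((permT p q hp hq)⁻¹) v).1 = step q p false v.1 := rfl

lemma permT_apply (p q : ℕ) (hp : 0 < p) (hq : 0 < q) (v : NFt p q) :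
    ((permT p q hp hq) v).1 = step p q true v.1 := rfl

open MulOpposite in
lemma relator_holds (p q : ℕ) (hp : 0 < p) (hq : 0 < q) :
    ∀ r ∈ bsRel p q,
      FreeGroup.lift (fun x : Bool => if x then op (permT p q hp hq) else op (permA p q)) r = 1 := by
  intro r hr
  rw [bsRel, Set.mem_singleton_iff] at hr
  subst hr
  simp only [map_mul, map_pow, map_inv, FreeGroup.lift_apply_of, if_true, Bool.false_eq_true, if_false]
  rw [mul_inv_eq_one, ← op_pow, ← op_pow, ← op_inv, ← op_mul, ← op_mul]
  rw [MulOpposite.op_inj]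
  apply Equiv.ext
  intro v
  apply Subtype.ext
  have h := step_step p q true hp hq v.1 (orW_true.mpr v.2.1) v.2.2 1
  rw [mul_one, mul_one] at h
  simp only [Bool.not_true] at h
  rw [Equiv.Perm.mul_apply, Equiv.Perm.mul_apply, permT_inv_apply, permA_pow_apply, permT_apply, h,
    permA_pow_apply]


open MulOpposite

def phi (p q : ℕ) (hp : 0 < p) (hq : 0 < q) : BS p q →* (Equiv.Perm (NFt p q))ᵐᵒᵖ :=
  PresentedGroup.toGroup (relator_holds p q hp hq)

lemma phi_a (p q : ℕ) (hp : 0 < p) (hq : 0 < q) :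
    phi p q hp hq (BS.a p q) = op (permA p q) := by
  rw [BS.a, phi, PresentedGroup.toGroup.of]
  simp

lemma phi_t (p q : ℕ) (hp : 0 < p) (hq : 0 < q) :
    phi p q hp hq (BS.t p q) = op (permT p q hp hq) := by
  rw [BS.t, phi, PresentedGroup.toGroup.of]
  simp

variable {p q : ℕ}

def act (hp : 0 < p) (hq : 0 < q) (x : BS p q) (v : NFt p q) : NFt p q :=
  ((phi p q hp hq x).unop) v

lemma act_mul (hp : 0 < p) (hq : 0 < q) (x y : BS p q) (v : NFt p q) :
    act hp hq (x * y) v = act hp hq y (act hp hq x v) := by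
  simp only [act, map_mul, unop_mul, Equiv.Perm.mul_apply]

lemma act_one (hp : 0 < p) (hq : 0 < q) (v : NFt p q) : act hp hq 1 v = v := by
  simp only [act, map_one, unop_one, Equiv.Perm.one_apply]

lemma act_a_zpow (hp : 0 < p) (hq : 0 < q) (k : ℤ) (v : NFt p q) :
    (act hp hq (BS.a p q ^ k) v).1 = (v.1.1, v.1.2 + k) := by
  rw [act, map_zpow, phi_a, ← op_zpow, unop_op, permA_zpow_apply]

lemma act_a_pow (hp : 0 < p) (hq : 0 < q) (k : ℕ) (v : NFt p q) :
    (act hp hq (BS.a p q ^ k) v).1 = (v.1.1, v.1.2 + k) := by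
  have := act_a_zpow hp hq (k : ℤ) v
  rw [zpow_natCast] at this
  exact this

lemma act_t (hp : 0 < p) (hq : 0 < q) (v : NFt p q) :
    (act hp hq (BS.t p q) v).1 = step p q true v.1 := by
  rw [act, phi_t, unop_op, permT_apply]

lemma act_t_inv (hp : 0 < p) (hq : 0 < q) (v : NFt p q) :
    (act hp hq (BS.t p q)⁻¹ v).1 = step q p false v.1 := by
  rw [act, map_inv, phi_t, ← op_inv, unop_op, permT_inv_apply]

lemma act_a (hp : 0 < p) (hq : 0 < q) (v : NFt p q) :
    (act hp hq (BS.a p q) v).1 = (v.1.1, v.1.2 + 1) := by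
  have := act_a_zpow hp hq 1 v
  rwa [zpow_one] at this

lemma act_a_inv (hp : 0 < p) (hq : 0 < q) (v : NFt p q) :
    (act hp hq (BS.a p q)⁻¹ v).1 = (v.1.1, v.1.2 - 1) := by
  have := act_a_zpow hp hq (-1) v
  rw [zpow_neg_one] at this
  rw [this]
  simp only [Prod.mk.injEq]
  exact ⟨trivial, by ring⟩

def base (p q : ℕ) : NFt p q := ⟨([], 0), by constructor <;> simp [Rr, List.Chain', List.IsChain.nil]⟩

lemma act_syls (hp : 0 < p) (hq : 0 < q) (w : List (ℕ × Bool))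
    (hw : ∀ s ∈ w, s.1 < if s.2 then q else p) (hred : w.Chain' Rr) :
    (act hp hq ((w.map (syl p q)).prod) (base p q)).1 = (w, 0) := by
  induction w using List.reverseRecOn with
  | nil => simp only [List.map_nil, List.prod_nil, act_one]; rfl
  | append_singleton w' s ih =>
    have hw' : ∀ s ∈ w', s.1 < if s.2 then q else p := fun s hs => hw s (by simp [hs])
    have hred' : w'.Chain' Rr := hred.prefix (List.prefix_append _ _)
    have ih' := ih hw' hred'
    rw [List.map_append, List.prod_append, List.map_singleton, List.prod_singleton,
      act_mul]
    set u := act hp hq ((w'.map (syl p q)).prod) (base p q) with hu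
    rw [syl, act_mul]
    set u2 := act hp hq (BS.a p q ^ s.1) u with hu2
    have hu2v : u2.1 = (w', (s.1 : ℤ)) := by
      rw [hu2, act_a_pow, ih']
      simp
    have hlast : s.1 = 0 → (Option.map Prod.snd w'.getLast? ≠ some (!s.2)) := by
      intro h0 hcon
      rcases hll : w'.getLast? with _ | x
      · rw [hll] at hcon; simp at hcon
      · rw [hll] at hcon
        simp only [Option.map_some, Option.some.injEq] at hcon
        have hrr : Rr x s := by
          simp only [List.Chain', List.isChain_append] at hred
          exact hred.2.2 x hll s rfl
        have := hrr h0
        rw [← this] at hcon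
        simp at hcon
    rcases hsb : s.2 with _ | _
    · -- s.2 = false : t⁻¹
      rw [if_neg (by simp [hsb]), act_t_inv, hu2v,
        step_append q p false hp (w', (s.1:ℤ)) (by positivity) ?h1 ?h2]
      case h1 =>
        simp only
        exact_mod_cast (by simpa [hsb] using hw s (by simp) : s.1 < p)
      case h2 =>
        simp only
        intro h0 hcon
        have h0' : s.1 = 0 := by exact_mod_cast h0
        have := hlast h0'
        rw [hsb] at this
        exact this hcon
      rw [← hsb]
      simp
    · -- s.2 = true : t
      rw [if_pos rfl, act_t, hu2v,
        step_append p q true hq (w', (s.1:ℤ)) (by positivity) ?g1 ?g2]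
      case g1 =>
        simp only
        exact_mod_cast (by simpa [hsb] using hw s (by simp) : s.1 < q)
      case g2 =>
        simp only
        intro h0 hcon
        have h0' : s.1 = 0 := by exact_mod_cast h0
        have := hlast h0'
        rw [hsb] at this
        exact this hcon
      rw [← hsb]
      simp


lemma len_act_gen (hp : 0 < p) (hq : 0 < q) (hpq : p < q) (g : BS p q)
    (hg : g ∈ genSet p q) (v : NFt p q) :
    LenW (act hp hq g v).1.1 ≤ LenW v.1.1 + q := by
  simp only [genSet, Set.mem_insert_iff, Set.mem_singleton_iff] at hg
  rcases hg with rfl | rfl | rfl | rfl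
  · rw [act_a]; exact Nat.le_add_right _ q
  · rw [act_a_inv]; exact Nat.le_add_right _ q
  · have h := step_len p q true hq v.1
    rw [act_t]; exact h
  · have h := step_len q p false hp v.1
    rw [act_t_inv]; omega

lemma mu_act_gen (hp : 0 < p) (hq : 0 < q) (hpq : p < q) (g : BS p q)
    (hg : g ∈ genSet p q) (v : NFt p q) :
    (p:ℝ) * (|((act hp hq g v).1.2 : ℝ)| + (p * ((q:ℝ) - 1)) / ((q:ℝ) - p))
      ≤ (q:ℝ) * (|(v.1.2 : ℝ)| + (p * ((q:ℝ) - 1)) / ((q:ℝ) - p)) := by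
  set c : ℝ := (p * ((q:ℝ) - 1)) / ((q:ℝ) - p) with hcdef
  have hpR : (0:ℝ) < p := by exact_mod_cast hp
  have hqR : (0:ℝ) < q := by exact_mod_cast hq
  have hpqR : (p:ℝ) < q := by exact_mod_cast hpq
  have h1q : (1:ℝ) ≤ q := by exact_mod_cast hq
  have h1p : (1:ℝ) ≤ p := by exact_mod_cast hp
  have hqp : (0:ℝ) < (q:ℝ) - p := by linarith
  have hc : c * ((q:ℝ) - p) = p * ((q:ℝ) - 1) := div_mul_cancel₀ _ hqp.ne'
  have hc0 : 0 ≤ c := div_nonneg (by nlinarith) hqp.le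
  have hN0 : (0:ℝ) ≤ |(v.1.2 : ℝ)| := abs_nonneg _
  have habs : ∀ z : ℤ, |((z : ℤ) : ℝ)| = ((|z| : ℤ) : ℝ) := fun z => by
    rw [Int.cast_abs]
  simp only [genSet, Set.mem_insert_iff, Set.mem_singleton_iff] at hg
  have hqz : ((q:ℤ)) ≠ 0 := by exact_mod_cast hq.ne'
  have hpz : ((p:ℤ)) ≠ 0 := by exact_mod_cast hp.ne'
  rcases hg with rfl | rfl | rfl | rfl
  · rw [act_a]
    simp only
    have h2q : (2:ℝ) ≤ q := by exact_mod_cast (by omega : 2 ≤ q)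
    have habd := abs_add_le ((v.1.2 : ℝ)) 1
    norm_num at habd
    push_cast
    nlinarith [mul_le_mul_of_nonneg_left habd hpR.le, mul_nonneg hN0 hqp.le,
      mul_nonneg hpR.le (by linarith : (0:ℝ) ≤ (q:ℝ) - 2)]
  · rw [act_a_inv]
    simp only
    have h2q : (2:ℝ) ≤ q := by exact_mod_cast (by omega : 2 ≤ q)
    have habd := abs_sub ((v.1.2 : ℝ)) 1
    norm_num at habd
    push_cast
    nlinarith [mul_le_mul_of_nonneg_left habd hpR.le, mul_nonneg hN0 hqp.le,
      mul_nonneg hpR.le (by linarith : (0:ℝ) ≤ (q:ℝ) - 2)]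
  · -- t
    rw [act_t]
    rcases step_N p q true v.1 (orW_true.mpr v.2.1) with hA | ⟨hr, j, hj, hB⟩
    · -- append branch
      have hZ : (q:ℤ) * |(step p q true v.1).2| ≤ (p:ℤ) * |v.1.2| + (p:ℤ) * ((q:ℤ) - 1) := by
        rw [hA]
        have hde := Int.mul_ediv_add_emod v.1.2 (q:ℤ)
        have hr0 : 0 ≤ v.1.2 % (q:ℤ) := Int.emod_nonneg _ hqz
        have hr1 : v.1.2 % (q:ℤ) < q := Int.emod_lt_of_pos _ (by exact_mod_cast hq)
        have e1 : (q:ℤ) * |(p:ℤ) * (v.1.2 / (q:ℤ))| = (p:ℤ) * |(q:ℤ) * (v.1.2 / (q:ℤ))| := by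
          rw [abs_mul, abs_mul, abs_of_nonneg (by positivity : (0:ℤ) ≤ (p:ℤ)),
            abs_of_nonneg (by positivity : (0:ℤ) ≤ (q:ℤ))]
          ring
        have e2 : |(q:ℤ) * (v.1.2 / (q:ℤ))| ≤ |v.1.2| + ((q:ℤ) - 1) := by
          have e3 : (q:ℤ) * (v.1.2 / (q:ℤ)) = v.1.2 - v.1.2 % (q:ℤ) := by linarith
          rw [e3]
          calc |v.1.2 - v.1.2 % (q:ℤ)| ≤ |v.1.2| + |v.1.2 % (q:ℤ)| := abs_sub _ _
            _ ≤ |v.1.2| + ((q:ℤ) - 1) := by rw [abs_of_nonneg hr0]; omega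
        calc (q:ℤ) * |(p:ℤ) * (v.1.2 / (q:ℤ))| = (p:ℤ) * |(q:ℤ) * (v.1.2 / (q:ℤ))| := e1
          _ ≤ (p:ℤ) * (|v.1.2| + ((q:ℤ) - 1)) := by
              exact mul_le_mul_of_nonneg_left e2 (by positivity)
          _ = (p:ℤ) * |v.1.2| + (p:ℤ) * ((q:ℤ) - 1) := by ring
      have hZR : (q:ℝ) * |((step p q true v.1).2 : ℝ)| ≤ (p:ℝ) * |(v.1.2:ℝ)| + (p:ℝ) * ((q:ℝ) - 1) := by
        rw [habs, habs]
        exact_mod_cast hZ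
      nlinarith [mul_le_mul_of_nonneg_left hZR hpR.le, mul_nonneg hc0 (sq_nonneg ((q:ℝ) - p)),
        mul_nonneg (mul_nonneg hN0 hqp.le) (by linarith : (0:ℝ) ≤ (q:ℝ) + p), hc,
        mul_le_mul_of_nonneg_left hc.le hpR.le, mul_le_mul_of_nonneg_left hc.ge hpR.le]
    · -- cancel branch
      have hZ : (q:ℤ) * |(step p q true v.1).2| ≤ (p:ℤ) * |v.1.2| + (q:ℤ) * ((p:ℤ) - 1) := by
        rw [hB]
        have hde := Int.mul_ediv_add_emod v.1.2 (q:ℤ)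
        have e3 : (q:ℤ) * (v.1.2 / (q:ℤ)) = v.1.2 := by omega
        have e2 : |(j:ℤ) + (p:ℤ) * (v.1.2 / (q:ℤ))| ≤ ((p:ℤ) - 1) + (p:ℤ) * |v.1.2 / (q:ℤ)| := by
          calc |(j:ℤ) + (p:ℤ) * (v.1.2 / (q:ℤ))| ≤ |(j:ℤ)| + |(p:ℤ) * (v.1.2 / (q:ℤ))| := abs_add_le _ _
            _ ≤ ((p:ℤ) - 1) + (p:ℤ) * |v.1.2 / (q:ℤ)| := by
                rw [abs_mul, abs_of_nonneg (by positivity : (0:ℤ) ≤ (p:ℤ)),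
                  abs_of_nonneg (by positivity : (0:ℤ) ≤ (j:ℤ))]
                have : (j:ℤ) ≤ (p:ℤ) - 1 := by omega
                omega
        have e4 : (q:ℤ) * |v.1.2 / (q:ℤ)| = |v.1.2| := by
          have e5 : |(q:ℤ) * (v.1.2 / (q:ℤ))| = |v.1.2| := by rw [e3]
          rwa [abs_mul, abs_of_nonneg (by positivity : (0:ℤ) ≤ (q:ℤ))] at e5
        calc (q:ℤ) * |(j:ℤ) + (p:ℤ) * (v.1.2 / (q:ℤ))|
            ≤ (q:ℤ) * (((p:ℤ) - 1) + (p:ℤ) * |v.1.2 / (q:ℤ)|) :=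
              mul_le_mul_of_nonneg_left e2 (by positivity)
          _ = (q:ℤ) * ((p:ℤ) - 1) + (p:ℤ) * ((q:ℤ) * |v.1.2 / (q:ℤ)|) := by ring
          _ = (q:ℤ) * ((p:ℤ) - 1) + (p:ℤ) * |v.1.2| := by rw [e4]
          _ = (p:ℤ) * |v.1.2| + (q:ℤ) * ((p:ℤ) - 1) := by ring
      have hZR : (q:ℝ) * |((step p q true v.1).2 : ℝ)| ≤ (p:ℝ) * |(v.1.2:ℝ)| + (q:ℝ) * ((p:ℝ) - 1) := by
        rw [habs, habs]
        exact_mod_cast hZ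
      nlinarith [mul_le_mul_of_nonneg_left hZR hpR.le, mul_nonneg hc0 (sq_nonneg ((q:ℝ) - p)),
        mul_nonneg (mul_nonneg hN0 hqp.le) (by linarith : (0:ℝ) ≤ (q:ℝ) + p), hc,
        mul_le_mul_of_nonneg_left hc.le hqR.le, mul_le_mul_of_nonneg_left hc.ge hqR.le]
  · -- t⁻¹
    rw [act_t_inv]
    rcases step_N q p false v.1 (orW_false.mpr v.2.1) with hA | ⟨hr, j, hj, hB⟩
    · -- append branch
      have hZ : (p:ℤ) * |(step q p false v.1).2| ≤ (q:ℤ) * |v.1.2| + (q:ℤ) * ((p:ℤ) - 1) := by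
        rw [hA]
        have hde := Int.mul_ediv_add_emod v.1.2 (p:ℤ)
        have hr0 : 0 ≤ v.1.2 % (p:ℤ) := Int.emod_nonneg _ hpz
        have hr1 : v.1.2 % (p:ℤ) < p := Int.emod_lt_of_pos _ (by exact_mod_cast hp)
        have e1 : (p:ℤ) * |(q:ℤ) * (v.1.2 / (p:ℤ))| = (q:ℤ) * |(p:ℤ) * (v.1.2 / (p:ℤ))| := by
          rw [abs_mul, abs_mul, abs_of_nonneg (by positivity : (0:ℤ) ≤ (p:ℤ)),
            abs_of_nonneg (by positivity : (0:ℤ) ≤ (q:ℤ))]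
          ring
        have e2 : |(p:ℤ) * (v.1.2 / (p:ℤ))| ≤ |v.1.2| + ((p:ℤ) - 1) := by
          have e3 : (p:ℤ) * (v.1.2 / (p:ℤ)) = v.1.2 - v.1.2 % (p:ℤ) := by linarith
          rw [e3]
          calc |v.1.2 - v.1.2 % (p:ℤ)| ≤ |v.1.2| + |v.1.2 % (p:ℤ)| := abs_sub _ _
            _ ≤ |v.1.2| + ((p:ℤ) - 1) := by rw [abs_of_nonneg hr0]; omega
        calc (p:ℤ) * |(q:ℤ) * (v.1.2 / (p:ℤ))| = (q:ℤ) * |(p:ℤ) * (v.1.2 / (p:ℤ))| := e1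
          _ ≤ (q:ℤ) * (|v.1.2| + ((p:ℤ) - 1)) := mul_le_mul_of_nonneg_left e2 (by positivity)
          _ = (q:ℤ) * |v.1.2| + (q:ℤ) * ((p:ℤ) - 1) := by ring
      have hZR : (p:ℝ) * |((step q p false v.1).2 : ℝ)| ≤ (q:ℝ) * |(v.1.2:ℝ)| + (q:ℝ) * ((p:ℝ) - 1) := by
        rw [habs, habs]
        exact_mod_cast hZ
      nlinarith [hZR, hc, hN0]
    · -- cancel branch
      have hZ : (p:ℤ) * |(step q p false v.1).2| ≤ (q:ℤ) * |v.1.2| + (p:ℤ) * ((q:ℤ) - 1) := by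
        rw [hB]
        have hde := Int.mul_ediv_add_emod v.1.2 (p:ℤ)
        have e3 : (p:ℤ) * (v.1.2 / (p:ℤ)) = v.1.2 := by omega
        have e2 : |(j:ℤ) + (q:ℤ) * (v.1.2 / (p:ℤ))| ≤ ((q:ℤ) - 1) + (q:ℤ) * |v.1.2 / (p:ℤ)| := by
          calc |(j:ℤ) + (q:ℤ) * (v.1.2 / (p:ℤ))| ≤ |(j:ℤ)| + |(q:ℤ) * (v.1.2 / (p:ℤ))| := abs_add_le _ _
            _ ≤ ((q:ℤ) - 1) + (q:ℤ) * |v.1.2 / (p:ℤ)| := by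
                rw [abs_mul, abs_of_nonneg (by positivity : (0:ℤ) ≤ (q:ℤ)),
                  abs_of_nonneg (by positivity : (0:ℤ) ≤ (j:ℤ))]
                have : (j:ℤ) ≤ (q:ℤ) - 1 := by omega
                omega
        have e4 : (p:ℤ) * |v.1.2 / (p:ℤ)| = |v.1.2| := by
          have e5 : |(p:ℤ) * (v.1.2 / (p:ℤ))| = |v.1.2| := by rw [e3]
          rwa [abs_mul, abs_of_nonneg (by positivity : (0:ℤ) ≤ (p:ℤ))] at e5
        calc (p:ℤ) * |(j:ℤ) + (q:ℤ) * (v.1.2 / (p:ℤ))|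
            ≤ (p:ℤ) * (((q:ℤ) - 1) + (q:ℤ) * |v.1.2 / (p:ℤ)|) :=
              mul_le_mul_of_nonneg_left e2 (by positivity)
          _ = (p:ℤ) * ((q:ℤ) - 1) + (q:ℤ) * ((p:ℤ) * |v.1.2 / (p:ℤ)|) := by ring
          _ = (p:ℤ) * ((q:ℤ) - 1) + (q:ℤ) * |v.1.2| := by rw [e4]
          _ = (q:ℤ) * |v.1.2| + (p:ℤ) * ((q:ℤ) - 1) := by ring
      have hZR : (p:ℝ) * |((step q p false v.1).2 : ℝ)| ≤ (q:ℝ) * |(v.1.2:ℝ)| + (p:ℝ) * ((q:ℝ) - 1) := by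
        rw [habs, habs]
        exact_mod_cast hZ
      nlinarith [hZR, hc, hN0]

lemma list_bound (hp : 0 < p) (hq : 0 < q) (hpq : p < q) (l : List (BS p q))
    (hl : ∀ g ∈ l, g ∈ genSet p q) :
    LenW (act hp hq l.prod (base p q)).1.1 ≤ q * l.length ∧
    |((act hp hq l.prod (base p q)).1.2 : ℝ)| + (p * ((q:ℝ) - 1)) / ((q:ℝ) - p)
      ≤ ((q:ℝ) / p) ^ l.length * ((p * ((q:ℝ) - 1)) / ((q:ℝ) - p)) := by
  have hpR : (0:ℝ) < p := by exact_mod_cast hp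
  induction l using List.reverseRecOn with
  | nil =>
    constructor
    · simp [act_one]
      rfl
    · rw [List.prod_nil, act_one]
      show |((0:ℤ):ℝ)| + _ ≤ _
      simp
  | append_singleton l' g ih =>
    have hl' : ∀ g ∈ l', g ∈ genSet p q := fun g hg => hl g (by simp [hg])
    have hgmem : g ∈ genSet p q := hl g (by simp)
    obtain ⟨ih1, ih2⟩ := ih hl'
    rw [List.prod_append, List.prod_singleton, act_mul]
    set u := act hp hq l'.prod (base p q) with hu
    constructor
    · calc LenW (act hp hq g u).1.1 ≤ LenW u.1.1 + q := len_act_gen hp hq hpq g hgmem u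
        _ ≤ q * l'.length + q := by omega
        _ = q * (l' ++ [g]).length := by simp; ring
    · have hstep := mu_act_gen hp hq hpq g hgmem u
      have h2 : |((act hp hq g u).1.2 : ℝ)| + (p * ((q:ℝ) - 1)) / ((q:ℝ) - p)
          ≤ ((q:ℝ)/p) * (|(u.1.2 : ℝ)| + (p * ((q:ℝ) - 1)) / ((q:ℝ) - p)) := by
        rw [div_mul_eq_mul_div, le_div_iff₀ hpR]
        nlinarith [hstep]
      calc |((act hp hq g u).1.2 : ℝ)| + (p * ((q:ℝ) - 1)) / ((q:ℝ) - p)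
          ≤ ((q:ℝ)/p) * (|(u.1.2 : ℝ)| + (p * ((q:ℝ) - 1)) / ((q:ℝ) - p)) := h2
        _ ≤ ((q:ℝ)/p) * (((q:ℝ) / p) ^ l'.length * ((p * ((q:ℝ) - 1)) / ((q:ℝ) - p))) :=
            mul_le_mul_of_nonneg_left ih2 (by positivity)
        _ = ((q:ℝ) / p) ^ (l' ++ [g]).length * ((p * ((q:ℝ) - 1)) / ((q:ℝ) - p)) := by
            rw [List.length_append]
            rw [show (l'.length + [g].length) = l'.length + 1 from by simp]
            rw [pow_succ]
            ring

lemma exists_list (p q : ℕ) (x : BS p q) :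
    ∃ l : List (BS p q), (∀ g ∈ l, g ∈ genSet p q) ∧ l.prod = x := by
  obtain ⟨y, rfl⟩ := PresentedGroup.mk_surjective (bsRel p q) x
  induction y using FreeGroup.induction_on with
  | C1 =>
    exact ⟨[], by simp, by simp⟩
  | of x =>
    refine ⟨[PresentedGroup.of x], ?_, by simp; rfl⟩
    intro g hg
    simp at hg
    subst hg
    cases x
    · left; rfl
    · right; right; left; rfl
  | inv_of x _ =>
    refine ⟨[(PresentedGroup.of x)⁻¹], ?_, by simp; rfl⟩
    intro g hg
    simp at hg
    subst hg
    cases x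
    · right; left; rfl
    · right; right; right; rfl
  | mul x y ihx ihy =>
    obtain ⟨l1, hl1, hp1⟩ := ihx
    obtain ⟨l2, hl2, hp2⟩ := ihy
    refine ⟨l1 ++ l2, ?_, by rw [List.prod_append, hp1, hp2]; simp⟩
    intro g hg
    rcases List.mem_append.1 hg with h | h
    · exact hl1 g h
    · exact hl2 g h

end BSAux

/-- In BS(p,q), 1 ≤ p < q: if x = w(a,t)·a^N in Britton normal form (w freely
reduced over {a^j t : 0 ≤ j < q} ∪ {a^j t⁻¹ : 0 ≤ j < p}), then with
C₁ = 1/(q+1) and D₁ = log_{q/p}(2qp/(q−p)) we have C₁|w| ≤ ‖x‖ + D₁ and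
C₁·log_{q/p}(|N|+1) ≤ ‖x‖ + D₁; more precisely |w| ≤ q‖x‖ and
log_{q/p}(|N|+1) ≤ ‖x‖ + log_{q/p}(2qp/(q−p)). -/
theorem stmt13 (p q : ℕ) (hp : 1 ≤ p) (hpq : p < q)
    (w : List (ℕ × Bool)) (hw : ∀ s ∈ w, s.1 < if s.2 then q else p)
    (hred : w.Chain' (fun s s' => s'.1 = 0 → s'.2 = s.2))
    (N : ℤ) (x : BS p q)
    (hx : x = (w.map (syl p q)).prod * BS.a p q ^ N) :
    (1 / ((q : ℝ) + 1)) * (((w.map (fun s => s.1 + 1)).sum : ℕ) : ℝ)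
        ≤ (wlen p q x : ℝ) + Real.logb ((q : ℝ) / p) (2 * q * p / ((q : ℝ) - p)) ∧
    (1 / ((q : ℝ) + 1)) * Real.logb ((q : ℝ) / p) (|(N : ℝ)| + 1)
        ≤ (wlen p q x : ℝ) + Real.logb ((q : ℝ) / p) (2 * q * p / ((q : ℝ) - p)) ∧
    ((((w.map (fun s => s.1 + 1)).sum : ℕ) : ℝ) ≤ (q : ℝ) * (wlen p q x : ℝ)) ∧
    Real.logb ((q : ℝ) / p) (|(N : ℝ)| + 1)
        ≤ (wlen p q x : ℝ) + Real.logb ((q : ℝ) / p) (2 * q * p / ((q : ℝ) - p)) := by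
  classical
  have hp0 : 0 < p := hp
  have hq0 : 0 < q := by omega
  obtain ⟨l0, hl0, hprod0⟩ := BSAux.exists_list p q x
  have hne : {n | ∃ l : List (BS p q), l.length = n ∧ (∀ g ∈ l, g ∈ genSet p q) ∧ l.prod = x}.Nonempty :=
    ⟨l0.length, l0, rfl, hl0, hprod0⟩
  have hmem : ∃ l : List (BS p q), l.length = wlen p q x ∧ (∀ g ∈ l, g ∈ genSet p q) ∧ l.prod = x := by
    rw [wlen]
    exact Nat.sInf_mem hne
  obtain ⟨l, hlen, hl, hlp⟩ := hmem
  have hcomp : (BSAux.act hp0 hq0 x (BSAux.base p q)).1 = (w, N) := by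
    rw [hx, BSAux.act_mul, BSAux.act_a_zpow, BSAux.act_syls hp0 hq0 w hw hred]
    simp
  obtain ⟨hLen, hMu⟩ := BSAux.list_bound hp0 hq0 hpq l hl
  rw [hlp, hcomp, hlen] at hLen hMu
  have hLen' : (w.map (fun s => s.1 + 1)).sum ≤ q * wlen p q x := hLen
  have hMu' : |(N:ℝ)| + (p * ((q:ℝ) - 1)) / ((q:ℝ) - p)
      ≤ ((q:ℝ) / p) ^ (wlen p q x) * ((p * ((q:ℝ) - 1)) / ((q:ℝ) - p)) := hMu
  have hpR : (0:ℝ) < p := by exact_mod_cast hp0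
  have hqR : (0:ℝ) < q := by exact_mod_cast hq0
  have hpqR : (p:ℝ) < q := by exact_mod_cast hpq
  have h1p : (1:ℝ) ≤ p := by exact_mod_cast hp
  have hqp : (0:ℝ) < (q:ℝ) - p := by linarith
  have hb : 1 < (q:ℝ) / p := (one_lt_div hpR).mpr hpqR
  have hc1 : (1:ℝ) ≤ (p * ((q:ℝ) - 1)) / ((q:ℝ) - p) := by
    rw [le_div_iff₀ hqp]
    nlinarith
  have hC2c : (p * ((q:ℝ) - 1)) / ((q:ℝ) - p) ≤ 2 * q * p / ((q:ℝ) - p) := by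
    apply (div_le_div_iff_of_pos_right hqp).mpr
    nlinarith
  have hC2pos : (0:ℝ) < 2 * q * p / ((q:ℝ) - p) := div_pos (by positivity) hqp
  have hbn : (0:ℝ) < ((q:ℝ) / p) ^ (wlen p q x) := by positivity
  have habs1 : (0:ℝ) < |(N:ℝ)| + 1 := by positivity
  have key : |(N:ℝ)| + 1 ≤ ((q:ℝ) / p) ^ (wlen p q x) * (2 * q * p / ((q:ℝ) - p)) := by
    have h3 : ((q:ℝ) / p) ^ (wlen p q x) * ((p * ((q:ℝ) - 1)) / ((q:ℝ) - p))
        ≤ ((q:ℝ) / p) ^ (wlen p q x) * (2 * q * p / ((q:ℝ) - p)) :=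
      mul_le_mul_of_nonneg_left hC2c hbn.le
    linarith
  have hD0 : 0 ≤ Real.logb ((q:ℝ)/p) (2 * q * p / ((q:ℝ) - p)) :=
    Real.logb_nonneg hb (le_trans hc1 hC2c)
  have hL4 : Real.logb ((q:ℝ)/p) (|(N:ℝ)| + 1)
      ≤ (wlen p q x : ℝ) + Real.logb ((q:ℝ)/p) (2 * q * p / ((q:ℝ) - p)) := by
    have hmono := (Real.logb_le_logb hb habs1 (by positivity)).mpr key
    rw [Real.logb_mul (by positivity) hC2pos.ne', Real.logb_pow,
      Real.logb_self_eq_one hb] at hmono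
    linarith
  have hL0 : 0 ≤ Real.logb ((q:ℝ)/p) (|(N:ℝ)| + 1) :=
    Real.logb_nonneg hb (by linarith [abs_nonneg (N:ℝ)])
  have hSum : ((((w.map (fun s => s.1 + 1)).sum : ℕ)) : ℝ) ≤ (q:ℝ) * (wlen p q x : ℝ) := by
    exact_mod_cast hLen'
  have hn0 : (0:ℝ) ≤ (wlen p q x : ℝ) := Nat.cast_nonneg _
  have hS0 : (0:ℝ) ≤ ((((w.map (fun s => s.1 + 1)).sum : ℕ)) : ℝ) := Nat.cast_nonneg _
  refine ⟨?_, ?_, hSum, hL4⟩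
  · rw [div_mul_eq_mul_div, div_le_iff₀ (by positivity : (0:ℝ) < (q:ℝ) + 1)]
    nlinarith
  · have hfac : (1 / ((q:ℝ) + 1)) ≤ 1 := by
      rw [div_le_one (by positivity : (0:ℝ) < (q:ℝ) + 1)]
      linarith
    have := mul_le_of_le_one_left hL0 hfac
    linarith
end

section
/- The polynomial 1 − z − 4z² has a root r ≈ 0.39039 in (0, 1/2), and 1/r = (1+√17)/2 ≈ 2.5616; consequently the dominant singularity of (1+z)²(1−2z)(1+z+2z³)/((1−z)(1−z−4z²)(1−z−2z²−2z³)) is the smallest positive root of 1 − z − 4z², i.e. the smallest positive root of 1−z−4z² is smaller than every positive root of (1−z)(1−z−2z²−2z³) and smaller than the moduli of all other roots of the denominator. -/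
/-- The polynomial 1 − z − 4z² has smallest positive root r = (√17 − 1)/8, with
0 < r < 1/2 and 1/r = (1+√17)/2; and r is smaller than the modulus of every
other root of the denominator (1−z)(1−z−4z²)(1−z−2z²−2z³), so it is the
dominant singularity of the growth series of BS(3,3). -/
theorem stmt17 :
    let r : ℝ := (Real.sqrt 17 - 1) / 8
    (1 - r - 4 * r ^ 2 = 0) ∧ (0 < r ∧ r < 1 / 2) ∧
    r⁻¹ = (1 + Real.sqrt 17) / 2 ∧
    (∀ x : ℝ, 0 < x → 1 - x - 4 * x ^ 2 = 0 → r ≤ x) ∧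
    (∀ z : ℂ, (1 - z) * (1 - z - 4 * z ^ 2) * (1 - z - 2 * z ^ 2 - 2 * z ^ 3) = 0 →
      z ≠ (r : ℂ) → r < ‖z‖) := by
  have hs : Real.sqrt 17 ^ 2 = 17 := Real.sq_sqrt (by norm_num)
  have hs4 : 4 < Real.sqrt 17 := by nlinarith [Real.sqrt_nonneg 17]
  have hs42 : Real.sqrt 17 < 21 / 5 := by nlinarith [Real.sqrt_nonneg 17]
  intro r
  have hrdef : r = (Real.sqrt 17 - 1) / 8 := rfl
  have hroot : 1 - r - 4 * r ^ 2 = 0 := by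
    rw [hrdef]; linear_combination (-(1:ℝ)/16) * hs
  have hr0 : 0 < r := by rw [hrdef]; linarith
  have hrhalf : r < 1 / 2 := by rw [hrdef]; linarith
  refine ⟨hroot, ⟨hr0, hrhalf⟩, ?_, ?_, ?_⟩
  · -- inverse
    have hne : Real.sqrt 17 - 1 ≠ 0 := by nlinarith
    rw [hrdef]
    field_simp
    linear_combination -hs
  · intro x hx0 hxeq
    by_contra h
    push_neg at h
    have h1 : 0 < r - x := by linarith
    have h2 : 0 < 1 + 4 * r + 4 * x := by linarith
    nlinarith [mul_pos h1 h2]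
  · intro z hz hzr
    by_contra hle
    push_neg at hle
    have habs : ‖z‖ ≤ r := hle
    rcases mul_eq_zero.mp hz with h12 | h3
    · rcases mul_eq_zero.mp h12 with h1 | h2
      · have hz1 : z = 1 := by linear_combination -h1
        rw [hz1] at habs
        simp at habs
        linarith
      · have hsC : (Real.sqrt 17 : ℂ) ^ 2 = 17 := by exact_mod_cast hs
        have hfac : (z - (r : ℂ)) * (z + (((1 + Real.sqrt 17) / 8 : ℝ) : ℂ)) = 0 := by
          rw [hrdef]
          push_cast
          linear_combination (-(1:ℂ)/64) * hsC + (-(1:ℂ)/4) * h2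
        rcases mul_eq_zero.mp hfac with hA | hB
        · exact hzr (sub_eq_zero.mp hA)
        · have hz' : z = -((((1 + Real.sqrt 17) / 8 : ℝ)) : ℂ) := by
            linear_combination hB
          have habs2 : ‖z‖ = (1 + Real.sqrt 17) / 8 := by
            rw [hz', norm_neg, Complex.norm_real, Real.norm_eq_abs, abs_of_pos (by linarith)]
          rw [habs2, hrdef] at habs
          linarith
    · have ha : ‖z‖ ≤ 2 / 5 := le_trans habs (by rw [hrdef]; linarith)
      have ha0 : 0 ≤ ‖z‖ := norm_nonneg z
      have h1 : (1 : ℂ) = z + 2 * z ^ 2 + 2 * z ^ 3 := by linear_combination h3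
      have t1 : ‖z + 2 * z ^ 2 + 2 * z ^ 3‖
          ≤ ‖z‖ + 2 * ‖z‖ ^ 2 + 2 * ‖z‖ ^ 3 := by
        calc ‖z + 2 * z ^ 2 + 2 * z ^ 3‖
            ≤ ‖z + 2 * z ^ 2‖ + ‖2 * z ^ 3‖ :=
              norm_add_le _ _
          _ ≤ ‖z‖ + ‖2 * z ^ 2‖ + ‖2 * z ^ 3‖ := by
              linarith [norm_add_le z (2 * z ^ 2)]
          _ = ‖z‖ + 2 * ‖z‖ ^ 2 + 2 * ‖z‖ ^ 3 := by
              simp [norm_mul, norm_pow]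
      have t2 : (1 : ℝ) ≤ ‖z‖ + 2 * ‖z‖ ^ 2 + 2 * ‖z‖ ^ 3 := by
        calc (1 : ℝ) = ‖(1 : ℂ)‖ := by simp
          _ = ‖z + 2 * z ^ 2 + 2 * z ^ 3‖ := by rw [← h1]
          _ ≤ _ := t1
      nlinarith [sq_nonneg (‖z‖), mul_nonneg ha0 ha0]
end

section
/- For integers 4 ≤ p ≤ q with p = 2k or 2k+1 and q = 2ℓ or 2ℓ+1, the polynomial P_{pq}(x) = x^{ℓ+1} − x^ℓ − 2(x^{ℓ−1}+⋯+x^{ℓ−k+1}) − C_k x^{ℓ−k} − 2(x^{ℓ−1}+⋯+x) − C_ℓ (with C_k = 1 if p even, 2 if p odd; C_ℓ = 1 if q even, 2 if q odd) has a unique real root greater than 1, and this root is at least 2. -/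
/-- For 4 ≤ p ≤ q with p ∈ {2k, 2k+1}, q ∈ {2ℓ, 2ℓ+1}, the polynomial
P_{pq}(x) = x^{ℓ+1} − x^ℓ − 2(x^{ℓ−1}+⋯+x^{ℓ−k+1}) − C_k x^{ℓ−k}
− 2(x^{ℓ−1}+⋯+x) − C_ℓ (C_k = 1 if p even else 2; C_ℓ = 1 if q even else 2)
has a unique real root greater than 1, and that root is at least 2. -/
theorem stmt18 (p q k l : ℕ) (hp : 4 ≤ p) (hpq : p ≤ q)
    (hk : p = 2 * k ∨ p = 2 * k + 1) (hl : q = 2 * l ∨ q = 2 * l + 1) :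
    ∃ x : ℝ, (1 < x ∧
        (fun y : ℝ => y ^ (l + 1) - y ^ l
            - 2 * (∑ i ∈ Finset.Ico (l - k + 1) l, y ^ i)
            - (if p = 2 * k then (1 : ℝ) else 2) * y ^ (l - k)
            - 2 * (∑ i ∈ Finset.Ico 1 l, y ^ i)
            - (if q = 2 * l then (1 : ℝ) else 2)) x = 0) ∧
      2 ≤ x ∧
      ∀ y : ℝ, 1 < y →
        (fun y : ℝ => y ^ (l + 1) - y ^ l
            - 2 * (∑ i ∈ Finset.Ico (l - k + 1) l, y ^ i)
            - (if p = 2 * k then (1 : ℝ) else 2) * y ^ (l - k)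
            - 2 * (∑ i ∈ Finset.Ico 1 l, y ^ i)
            - (if q = 2 * l then (1 : ℝ) else 2)) y = 0 → y = x := by
  have hk2 : 2 ≤ k := by omega
  have hl2 : 2 ≤ l := by omega
  have hlk : k ≤ l := by omega
  set c1 : ℝ := if p = 2 * k then (1 : ℝ) else 2 with hc1def
  set c2 : ℝ := if q = 2 * l then (1 : ℝ) else 2 with hc2def
  have hc1a : (1:ℝ) ≤ c1 := by rw [hc1def]; split <;> norm_num
  have hc1b : c1 ≤ 2 := by rw [hc1def]; split <;> norm_num
  have hc2a : (1:ℝ) ≤ c2 := by rw [hc2def]; split <;> norm_num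
  have hc2b : c2 ≤ 2 := by rw [hc2def]; split <;> norm_num
  set F : ℝ → ℝ := fun y : ℝ => y ^ (l + 1) - y ^ l
            - 2 * (∑ i ∈ Finset.Ico (l - k + 1) l, y ^ i)
            - c1 * y ^ (l - k)
            - 2 * (∑ i ∈ Finset.Ico 1 l, y ^ i)
            - c2 with hFdef
  set G : ℝ → ℝ := fun y : ℝ => y - 1
            - 2 * (∑ i ∈ Finset.Ico (l - k + 1) l, (y⁻¹) ^ (l - i))
            - c1 * (y⁻¹) ^ k
            - 2 * (∑ i ∈ Finset.Ico 1 l, (y⁻¹) ^ (l - i))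
            - c2 * (y⁻¹) ^ l with hGdef
  have hFG : ∀ y : ℝ, 0 < y → F y = y ^ l * G y := by
    intro y hy
    have hy0 : y ≠ 0 := ne_of_gt hy
    have key : ∀ i : ℕ, i ≤ l → y ^ l * (y⁻¹) ^ (l - i) = y ^ i := by
      intro i hi
      have h1 : y ^ l = y ^ i * y ^ (l - i) := by
        rw [← pow_add]; congr 1; omega
      rw [h1, mul_assoc, ← mul_pow, mul_inv_cancel₀ hy0, one_pow, mul_one]
    have e1 : y ^ l * (∑ i ∈ Finset.Ico (l - k + 1) l, (y⁻¹) ^ (l - i))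
        = ∑ i ∈ Finset.Ico (l - k + 1) l, y ^ i := by
      rw [Finset.mul_sum]
      exact Finset.sum_congr rfl fun i hi => key i (Finset.mem_Ico.mp hi).2.le
    have e2 : y ^ l * (∑ i ∈ Finset.Ico 1 l, (y⁻¹) ^ (l - i))
        = ∑ i ∈ Finset.Ico 1 l, y ^ i := by
      rw [Finset.mul_sum]
      exact Finset.sum_congr rfl fun i hi => key i (Finset.mem_Ico.mp hi).2.le
    have e3 : y ^ l * (y⁻¹) ^ k = y ^ (l - k) := by
      have h := key (l - k) (by omega)
      rwa [show l - (l - k) = k by omega] at h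
    have e4 : y ^ l * (y⁻¹) ^ l = 1 := by
      have h := key 0 (by omega)
      rwa [Nat.sub_zero, pow_zero] at h
    simp only [hFdef, hGdef]
    rw [mul_sub, mul_sub, mul_sub, mul_sub, mul_sub, mul_one,
        show y ^ l * (2 * (∑ i ∈ Finset.Ico (l - k + 1) l, (y⁻¹) ^ (l - i)))
          = 2 * (y ^ l * (∑ i ∈ Finset.Ico (l - k + 1) l, (y⁻¹) ^ (l - i))) by ring,
        e1,
        show y ^ l * (c1 * (y⁻¹) ^ k) = c1 * (y ^ l * (y⁻¹) ^ k) by ring, e3,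
        show y ^ l * (2 * (∑ i ∈ Finset.Ico 1 l, (y⁻¹) ^ (l - i)))
          = 2 * (y ^ l * (∑ i ∈ Finset.Ico 1 l, (y⁻¹) ^ (l - i))) by ring,
        e2,
        show y ^ l * (c2 * (y⁻¹) ^ l) = c2 * (y ^ l * (y⁻¹) ^ l) by ring, e4,
        mul_one, ← pow_succ]
  have hmono : ∀ a b : ℝ, 1 < a → a < b → G a < G b := by
    intro a b ha hab
    have ha0 : (0:ℝ) < a := by linarith
    have hb0 : (0:ℝ) < b := by linarith
    have hinv : b⁻¹ ≤ a⁻¹ := by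
      apply inv_anti₀ ha0 hab.le
    have hbinv : (0:ℝ) ≤ b⁻¹ := by positivity
    have t1 : ∑ i ∈ Finset.Ico (l - k + 1) l, (b⁻¹) ^ (l - i)
        ≤ ∑ i ∈ Finset.Ico (l - k + 1) l, (a⁻¹) ^ (l - i) :=
      Finset.sum_le_sum fun i _ => pow_le_pow_left₀ hbinv hinv _
    have t2 : ∑ i ∈ Finset.Ico 1 l, (b⁻¹) ^ (l - i)
        ≤ ∑ i ∈ Finset.Ico 1 l, (a⁻¹) ^ (l - i) :=
      Finset.sum_le_sum fun i _ => pow_le_pow_left₀ hbinv hinv _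
    have t3 : c1 * (b⁻¹) ^ k ≤ c1 * (a⁻¹) ^ k :=
      mul_le_mul_of_nonneg_left (pow_le_pow_left₀ hbinv hinv _) (by linarith)
    have t4 : c2 * (b⁻¹) ^ l ≤ c2 * (a⁻¹) ^ l :=
      mul_le_mul_of_nonneg_left (pow_le_pow_left₀ hbinv hinv _) (by linarith)
    simp only [hGdef]
    linarith
  -- F 2 < 0
  have hF2 : F 2 < 0 := by
    have hS1 : (0:ℝ) ≤ ∑ i ∈ Finset.Ico (l - k + 1) l, (2:ℝ) ^ i :=
      Finset.sum_nonneg fun i _ => by positivity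
    have hS2 : (2:ℝ) ^ (l - 1) ≤ ∑ i ∈ Finset.Ico 1 l, (2:ℝ) ^ i := by
      apply Finset.single_le_sum (f := fun i => (2:ℝ) ^ i)
        (fun i _ => by positivity)
      simp only [Finset.mem_Ico]; omega
    have hck : (0:ℝ) ≤ c1 * 2 ^ (l - k) := by positivity
    have e1 : (2:ℝ) ^ (l + 1) = 2 * 2 ^ l := by rw [pow_succ]; ring
    have e2 : (2:ℝ) ^ l = 2 * 2 ^ (l - 1) := by
      rw [← pow_succ']; congr 1; omega
    simp only [hFdef]
    nlinarith [hS1, hS2, hck]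
  -- F M > 0 for M = 4l + 6
  set M : ℝ := 4 * l + 6 with hMdef
  have hM1 : (1:ℝ) ≤ M := by
    have : (2:ℝ) ≤ (l:ℝ) := by exact_mod_cast hl2
    simp only [hMdef]; linarith
  have hMpos : (0:ℝ) < M := by linarith
  have hMinv1 : M⁻¹ ≤ 1 := by
    rw [inv_le_one_iff₀]; right; exact hM1
  have hMinv0 : (0:ℝ) ≤ M⁻¹ := by positivity
  have hpowle : ∀ m : ℕ, (M⁻¹) ^ m ≤ 1 := fun m => pow_le_one₀ hMinv0 hMinv1
  have hGM : 0 < G M := by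
    have t1 : ∑ i ∈ Finset.Ico (l - k + 1) l, (M⁻¹) ^ (l - i) ≤ (l:ℝ) := by
      calc ∑ i ∈ Finset.Ico (l - k + 1) l, (M⁻¹) ^ (l - i)
          ≤ (Finset.Ico (l - k + 1) l).card • (1:ℝ) :=
            Finset.sum_le_card_nsmul _ _ _ fun i _ => hpowle _
        _ = ((Finset.Ico (l - k + 1) l).card : ℝ) := by simp
        _ ≤ (l:ℝ) := by
            rw [Nat.card_Ico]; exact_mod_cast Nat.sub_le _ _ |>.trans (by omega)
    have t2 : ∑ i ∈ Finset.Ico 1 l, (M⁻¹) ^ (l - i) ≤ (l:ℝ) := by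
      calc ∑ i ∈ Finset.Ico 1 l, (M⁻¹) ^ (l - i)
          ≤ (Finset.Ico 1 l).card • (1:ℝ) :=
            Finset.sum_le_card_nsmul _ _ _ fun i _ => hpowle _
        _ = ((Finset.Ico 1 l).card : ℝ) := by simp
        _ ≤ (l:ℝ) := by rw [Nat.card_Ico]; exact_mod_cast Nat.sub_le _ _
    have t3 : c1 * (M⁻¹) ^ k ≤ 2 := by
      calc c1 * (M⁻¹) ^ k ≤ 2 * 1 :=
            mul_le_mul hc1b (hpowle _) (by positivity) (by norm_num)
        _ = 2 := by norm_num
    have t4 : c2 * (M⁻¹) ^ l ≤ 2 := by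
      calc c2 * (M⁻¹) ^ l ≤ 2 * 1 :=
            mul_le_mul hc2b (hpowle _) (by positivity) (by norm_num)
        _ = 2 := by norm_num
    simp only [hGdef, hMdef] at t1 t2 t3 t4 ⊢
    linarith
  have hFM : 0 < F M := by
    rw [hFG M hMpos]
    exact mul_pos (pow_pos hMpos l) hGM
  have h2M : (2:ℝ) ≤ M := by linarith
  have hcont : Continuous F := by
    simp only [hFdef]
    apply Continuous.sub
    apply Continuous.sub
    apply Continuous.sub
    apply Continuous.sub
    apply Continuous.sub
    · exact continuous_pow _
    · exact continuous_pow _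
    · exact continuous_const.mul (continuous_finset_sum _ fun i _ => continuous_pow _)
    · exact continuous_const.mul (continuous_pow _)
    · exact continuous_const.mul (continuous_finset_sum _ fun i _ => continuous_pow _)
    · exact continuous_const
  obtain ⟨x, hx, hFx⟩ := intermediate_value_Icc h2M hcont.continuousOn ⟨hF2.le, hFM.le⟩
  have hx2 : (2:ℝ) ≤ x := hx.1
  have hx1 : (1:ℝ) < x := by linarith
  have hGx : G x = 0 := by
    have h := hFG x (by linarith)
    rw [hFx] at h
    have hxl : x ^ l ≠ 0 := by positivity
    field_simp at h
    exact (mul_eq_zero.mp h.symm).resolve_left hxl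
  refine ⟨x, ⟨hx1, hFx⟩, hx2, ?_⟩
  intro y hy hFy
  have hGy : G y = 0 := by
    have h := hFG y (by linarith)
    rw [hFy] at h
    have hyl : y ^ l ≠ 0 := by positivity
    field_simp at h
    exact (mul_eq_zero.mp h.symm).resolve_left hyl
  rcases lt_trichotomy y x with h | h | h
  · exact absurd (hmono y x hy h) (by rw [hGy, hGx]; exact lt_irrefl 0)
  · exact h
  · exact absurd (hmono x y hx1 h) (by rw [hGy, hGx]; exact lt_irrefl 0)
end
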